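/- arXiv:1210.4710 — 4 statements merged into one kernel-verified Lean document; each statement's English description precedes it below -/
import Mathlib

section
/- For any simple graph G with maximum degree Δ and maximum matching size ν, the number of edges satisfies |E(G)| ≤ Δν + ⌊ν/⌈Δ/2⌉⌋·⌊Δ/2⌋. -/
open scoped Classical

/-- `M` is a matching of `G`, given as a finite set of edges. -/
def IsMatchingFinset {V : Type*} (G : SimpleGraph V) (M : Finset (Sym2 V)) : Prop :=
  (M : Set (Sym2 V)) ⊆ G.edgeSet ∧
    ∀ e ∈ M, ∀ f ∈ M, e ≠ f → ∀ v : V, ¬(v ∈ e ∧ v ∈ f)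

/-- ν(G): the maximum size of a matching of `G`. -/
noncomputable def matchingNumber {V : Type*} (G : SimpleGraph V) : ℕ :=
  sSup {n | ∃ M : Finset (Sym2 V), IsMatchingFinset G M ∧ M.card = n}

/-- A proper edge coloring of `G` using colors `< n`. -/
def IsProperEdgeColoring {V : Type*} (G : SimpleGraph V) (n : ℕ) (c : Sym2 V → ℕ) : Prop :=
  (∀ e ∈ G.edgeSet, c e < n) ∧
    ∀ e ∈ G.edgeSet, ∀ f ∈ G.edgeSet, e ≠ f → (∃ v : V, v ∈ e ∧ v ∈ f) → c e ≠ c f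

/-- χ'(G): the edge chromatic index of `G`. -/
noncomputable def chromaticIndex {V : Type*} (G : SimpleGraph V) : ℕ :=
  sInf {n | ∃ c : Sym2 V → ℕ, IsProperEdgeColoring G n c}

/-- `G` is friendly-edge-colorable: its edge set is partitioned into maximum matchings. -/
noncomputable def Friendly {V : Type*} [Fintype V] (G : SimpleGraph V) : Prop :=
  ∃ P : Finset (Finset (Sym2 V)),
    (∀ M ∈ P, IsMatchingFinset G M ∧ M.card = matchingNumber G) ∧
    (∀ e, e ∈ G.edgeFinset ↔ ∃ M ∈ P, e ∈ M) ∧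
    ∀ M ∈ P, ∀ N ∈ P, M ≠ N → Disjoint M N

/-- The graph `G` with vertex `x` deleted. -/
def delVert {V : Type*} (G : SimpleGraph V) (x : V) : SimpleGraph {v : V // v ≠ x} :=
  G.induce {v : V | v ≠ x}

/-- `G` has a perfect matching. -/
def HasPerfectMatchingFinset {V : Type*} (G : SimpleGraph V) : Prop :=
  ∃ M : Finset (Sym2 V), IsMatchingFinset G M ∧ ∀ v : V, ∃ e ∈ M, v ∈ e

/-- `G` is factor-critical. -/
def FactorCritical {V : Type*} (G : SimpleGraph V) : Prop :=
  G.Connected ∧ ∀ x : V, HasPerfectMatchingFinset (delVert G x)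

namespace CH

variable {V : Type*}

def PW (M : Finset (Sym2 V)) : Prop :=
  ∀ e ∈ M, ∀ f ∈ M, e ≠ f → ∀ v : V, ¬(v ∈ e ∧ v ∈ f)

def Cov (M : Finset (Sym2 V)) (v : V) : Prop := ∃ e ∈ M, v ∈ e

lemma PW.mono {M N : Finset (Sym2 V)} (h : N ⊆ M) (hM : PW M) : PW N :=
  fun e he f hf hef v => hM e (h he) f (h hf) hef v

lemma cov_unique {M : Finset (Sym2 V)} (hM : PW M) {e f : Sym2 V} {v : V}
    (he : e ∈ M) (hf : f ∈ M) (hv : v ∈ e) (hv' : v ∈ f) : e = f := by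
  by_contra h; exact hM e he f hf h v ⟨hv, hv'⟩

lemma cov_erase {M : Finset (Sym2 V)} (hM : PW M) {e : Sym2 V} (he : e ∈ M) (y : V) :
    Cov (M.erase e) y ↔ Cov M y ∧ y ∉ e := by
  constructor
  · rintro ⟨f, hf, hyf⟩
    refine ⟨⟨f, M.erase_subset e hf, hyf⟩, fun hye => ?_⟩
    exact (Finset.ne_of_mem_erase hf) (cov_unique hM (M.erase_subset e hf) he hyf hye)
  · rintro ⟨⟨f, hf, hyf⟩, hye⟩
    exact ⟨f, Finset.mem_erase.2 ⟨fun h => hye (h ▸ hyf), hf⟩, hyf⟩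

lemma cov_insert {M : Finset (Sym2 V)} (f : Sym2 V) (y : V) :
    Cov (insert f M) y ↔ y ∈ f ∨ Cov M y := by
  constructor
  · rintro ⟨e, he, hye⟩
    rcases Finset.mem_insert.1 he with rfl | he
    · exact Or.inl hye
    · exact Or.inr ⟨e, he, hye⟩
  · rintro (h | ⟨e, he, hye⟩)
    · exact ⟨f, Finset.mem_insert_self f M, h⟩
    · exact ⟨e, Finset.mem_insert_of_mem he, hye⟩


lemma pw_insert {N : Finset (Sym2 V)} (hN : PW N) {e : Sym2 V} (hkey : ∀ v ∈ e, ¬ Cov N v) :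
    PW (insert e N) := by
  intro a ha b hb hab v hv
  rcases Finset.mem_insert.1 ha with ha' | ha'
  · rcases Finset.mem_insert.1 hb with hb' | hb'
    · exact hab (ha'.trans hb'.symm)
    · exact hkey v (ha' ▸ hv.1) ⟨b, hb', hv.2⟩
  · rcases Finset.mem_insert.1 hb with hb' | hb'
    · exact hkey v (hb' ▸ hv.2) ⟨a, ha', hv.1⟩
    · exact hN a ha' b hb' hab v hv

lemma base_left {M N : Finset (Sym2 V)} (hN : PW N) {e : Sym2 V} (heM : e ∈ M)
    {w : V} (hwe : w ∈ e) (hkey : ∀ v ∈ e, ¬ Cov N v) :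
    insert e N ⊆ M ∪ N ∧ PW (insert e N) ∧ (insert e N).card = N.card + 1 := by
  have heN : e ∉ N := fun h => hkey w hwe ⟨e, h, hwe⟩
  exact ⟨Finset.insert_subset (Finset.mem_union_left _ heM) Finset.subset_union_right,
    pw_insert hN hkey, Finset.card_insert_of_notMem heN⟩

lemma swap_lemma : ∀ (n : ℕ) (M N : Finset (Sym2 V)), N.card ≤ n → PW M → PW N →
    (∀ e ∈ M, ¬ e.IsDiag) → (∀ e ∈ N, ¬ e.IsDiag) →
    ∀ w : V, Cov M w → ¬ Cov N w →
    (∃ N' : Finset (Sym2 V), N' ⊆ M ∪ N ∧ PW N' ∧ N'.card = N.card + 1) ∨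
    (∃ M' : Finset (Sym2 V), ∃ x : V, M' ⊆ M ∪ N ∧ PW M' ∧ M'.card = M.card ∧
      ¬ Cov M x ∧ Cov N x ∧ ∀ y : V, Cov M' y ↔ (Cov M y ∧ y ≠ w) ∨ y = x) := by
  intro n
  induction n with
  | zero =>
    intro M N hn hM hN hMd hNd w hw hNw
    obtain ⟨e, heM, hwe⟩ := hw
    have hNe : N = ∅ := Finset.card_eq_zero.1 (Nat.le_zero.1 hn)
    subst hNe
    left
    exact ⟨insert e ∅, base_left hN heM hwe (by rintro v - ⟨f, hf, -⟩; exact absurd hf (Finset.notMem_empty f))⟩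
  | succ n IH =>
    intro M N hn hM hN hMd hNd w hw hNw
    obtain ⟨e, heM, hwe⟩ := hw
    obtain ⟨w', hee⟩ := Sym2.mem_iff_exists.1 hwe
    have hww' : w ≠ w' := by
      intro h
      exact hMd e heM (by rw [hee, ← h]; exact Sym2.mk_isDiag_iff.2 rfl)
    have hw'e : w' ∈ e := by rw [hee]; exact Sym2.mem_mk_right w w'
    by_cases hc : Cov N w'
    · obtain ⟨f, hfN, hw'f⟩ := hc
      obtain ⟨w'', hff⟩ := Sym2.mem_iff_exists.1 hw'f
      have hw'w'' : w' ≠ w'' := by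
        intro h
        exact hNd f hfN (by rw [hff, ← h]; exact Sym2.mk_isDiag_iff.2 rfl)
      have hw''f : w'' ∈ f := by rw [hff]; exact Sym2.mem_mk_right w' w''
      have hwf : w ∉ f := fun h => hNw ⟨f, hfN, h⟩
      have hfe : f ≠ e := fun h => hwf (h ▸ hwe)
      have hw''w : w'' ≠ w := fun h => hwf (h ▸ hw''f)
      have hmem_e : ∀ v, v ∈ e ↔ (v = w ∨ v = w') := by
        intro v; rw [hee]; exact Sym2.mem_iff
      have hmem_f : ∀ v, v ∈ f ↔ (v = w' ∨ v = w'') := by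
        intro v; rw [hff]; exact Sym2.mem_iff
      have hw''e : w'' ∉ e := by
        rw [hmem_e]; rintro (rfl | rfl); exact hw''w rfl; exact hw'w'' rfl
      -- uniqueness facts
      have huniq_w : ∀ g ∈ M, w ∈ g → g = e := fun g hg hwg => cov_unique hM hg heM hwg hwe
      have huniq_w' : ∀ g ∈ M, w' ∈ g → g = e := fun g hg hwg => cov_unique hM hg heM hwg hw'e
      have huniq_fw' : ∀ g ∈ N, w' ∈ g → g = f := fun g hg hwg => cov_unique hN hg hfN hwg hw'f
      by_cases hc2 : Cov M w''
      · obtain ⟨g, hgM, hw''g⟩ := hc2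
        have hge : g ≠ e := fun h => hw''e (h ▸ hw''g)
        have hcard1 : 1 ≤ N.card := Finset.card_pos.2 ⟨f, hfN⟩
        have hNcard : (N.erase f).card ≤ n := by
          rw [Finset.card_erase_of_mem hfN]; omega
        have hMcard1 : 1 ≤ M.card := Finset.card_pos.2 ⟨e, heM⟩
        have hcovM₁w'' : Cov (M.erase e) w'' :=
          ⟨g, Finset.mem_erase.2 ⟨hge, hgM⟩, hw''g⟩
        have hncovN₁w'' : ¬ Cov (N.erase f) w'' :=
          fun h => ((cov_erase hN hfN w'').1 h).2 hw''f
        rcases IH (M.erase e) (N.erase f) hNcard (hM.mono (Finset.erase_subset e M))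
            (hN.mono (Finset.erase_subset f N))
            (fun a ha => hMd a (Finset.erase_subset e M ha))
            (fun a ha => hNd a (Finset.erase_subset f N ha))
            w'' hcovM₁w'' hncovN₁w'' with
          ⟨N₁', hsub, hpw, hcard⟩ | ⟨M₁', x, hsub, hpw, hcard, hxM, hxN, hcov⟩
        · -- augmenting case: insert e
          left
          have hsub' : N₁' ⊆ M ∪ N := hsub.trans
            (Finset.union_subset_union (Finset.erase_subset e M) (Finset.erase_subset f N))
          have hkey : ∀ v ∈ e, ¬ Cov N₁' v := by
            intro v hv ⟨h, hh, hvh⟩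
            rcases Finset.mem_union.1 (hsub hh) with hhM | hhN
            · -- h ∈ M.erase e contains v ∈ e
              have := cov_unique hM (Finset.erase_subset e M hhM) heM hvh hv
              exact Finset.ne_of_mem_erase hhM this
            · rcases (hmem_e v).1 hv with rfl | rfl
              · exact hNw ⟨h, Finset.erase_subset f N hhN, hvh⟩
              · exact Finset.ne_of_mem_erase hhN
                  (huniq_fw' h (Finset.erase_subset f N hhN) hvh)
          have heN₁' : e ∉ N₁' := fun h => hkey w hwe ⟨e, h, hwe⟩
          refine ⟨insert e N₁', Finset.insert_subset (Finset.mem_union_left _ heM) hsub',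
            pw_insert hpw hkey, ?_⟩
          · rw [Finset.card_insert_of_notMem heN₁', hcard, Finset.card_erase_of_mem hfN]
            omega
        · -- swap case: insert f
          right
          have hxnw : x ≠ w := by
            rintro rfl
            obtain ⟨h, hh, hxh⟩ := hxN
            exact hNw ⟨h, Finset.erase_subset f N hh, hxh⟩
          have hxnw' : x ≠ w' := by
            rintro rfl
            obtain ⟨h, hh, hxh⟩ := hxN
            exact Finset.ne_of_mem_erase hh (huniq_fw' h (Finset.erase_subset f N hh) hxh)
          have hxnw'' : x ≠ w'' := fun h => hxM (h ▸ hcovM₁w'')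
          have hnc1 : ¬ Cov M₁' w' := by
            rw [hcov w']
            rintro (⟨hcM, -⟩ | h)
            · exact ((cov_erase hM heM w').1 hcM).2 hw'e
            · exact hxnw' h.symm
          have hnc2 : ¬ Cov M₁' w'' := by
            rw [hcov w'']
            rintro (⟨-, h⟩ | h)
            · exact h rfl
            · exact hxnw'' h.symm
          have hkeyf : ∀ v ∈ f, ¬ Cov M₁' v := by
            intro v hv
            rcases (hmem_f v).1 hv with rfl | rfl
            · exact hnc1
            · exact hnc2
          have hfM₁' : f ∉ M₁' := fun h => hnc1 ⟨f, h, hw'f⟩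
          have hsub' : M₁' ⊆ M ∪ N := hsub.trans
            (Finset.union_subset_union (Finset.erase_subset e M) (Finset.erase_subset f N))
          refine ⟨insert f M₁', x,
            Finset.insert_subset (Finset.mem_union_right _ hfN) hsub',
            pw_insert hpw hkeyf, ?_, ?_, ?_, ?_⟩
          · rw [Finset.card_insert_of_notMem hfM₁', hcard, Finset.card_erase_of_mem heM]
            omega
          · -- ¬ Cov M x
            rintro ⟨h, hh, hxh⟩
            rcases eq_or_ne h e with rfl | hne
            · rcases (hmem_e x).1 hxh with rfl | rfl
              · exact hxnw rfl
              · exact hxnw' rfl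
            · exact hxM ⟨h, Finset.mem_erase.2 ⟨hne, hh⟩, hxh⟩
          · -- Cov N x
            obtain ⟨h, hh, hxh⟩ := hxN
            exact ⟨h, Finset.erase_subset f N hh, hxh⟩
          · -- coverage description
            intro y
            rw [cov_insert, hcov y, cov_erase hM heM y, hmem_f y]
            constructor
            · rintro ((rfl | rfl) | (⟨⟨hcM, hye⟩, hyw''⟩ | rfl))
              · exact Or.inl ⟨⟨e, heM, hw'e⟩, hww'.symm⟩
              · exact Or.inl ⟨⟨g, hgM, hw''g⟩, hw''w⟩
              · exact Or.inl ⟨hcM, fun h => hye ((hmem_e y).2 (Or.inl h))⟩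
              · exact Or.inr rfl
            · rintro (⟨hcM, hyw⟩ | rfl)
              · by_cases hy1 : y = w'
                · exact Or.inl (Or.inl hy1)
                · by_cases hy2 : y = w''
                  · exact Or.inl (Or.inr hy2)
                  · refine Or.inr (Or.inl ⟨⟨hcM, ?_⟩, hy2⟩)
                    rw [hmem_e y]; rintro (rfl | rfl); exact hyw rfl; exact hy1 rfl
              · exact Or.inr (Or.inr rfl)
      · -- base swap case : w'' uncovered by M
        right
        have hM₁pw := hM.mono (Finset.erase_subset e M)
        have hw'M₁ : ¬ Cov (M.erase e) w' := fun h => ((cov_erase hM heM w').1 h).2 hw'e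
        have hw''M₁ : ¬ Cov (M.erase e) w'' := by
          rintro ⟨h, hh, hvh⟩
          exact hc2 ⟨h, Finset.erase_subset e M hh, hvh⟩
        have hkeyf : ∀ v ∈ f, ¬ Cov (M.erase e) v := by
          intro v hv
          rcases (hmem_f v).1 hv with rfl | rfl
          · exact hw'M₁
          · exact hw''M₁
        have hfM₁ : f ∉ M.erase e := fun h => hw'M₁ ⟨f, h, hw'f⟩
        have hMcard1 : 1 ≤ M.card := Finset.card_pos.2 ⟨e, heM⟩
        refine ⟨insert f (M.erase e), w'',
          Finset.insert_subset (Finset.mem_union_right _ hfN)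
            ((Finset.erase_subset e M).trans Finset.subset_union_left),
          pw_insert hM₁pw hkeyf, ?_, hc2, ⟨f, hfN, hw''f⟩, ?_⟩
        · rw [Finset.card_insert_of_notMem hfM₁, Finset.card_erase_of_mem heM]
          omega
        · intro y
          rw [cov_insert, cov_erase hM heM y, hmem_f y]
          constructor
          · rintro ((rfl | rfl) | ⟨hcM, hye⟩)
            · exact Or.inl ⟨⟨e, heM, hw'e⟩, hww'.symm⟩
            · exact Or.inr rfl
            · exact Or.inl ⟨hcM, fun h => hye ((hmem_e y).2 (Or.inl h))⟩
          · rintro (⟨hcM, hyw⟩ | rfl)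
            · by_cases hy1 : y = w'
              · exact Or.inl (Or.inl hy1)
              · by_cases hy2 : y = w''
                · exact Or.inl (Or.inr hy2)
                · refine Or.inr ⟨hcM, ?_⟩
                  rw [hmem_e y]; rintro (rfl | rfl); exact hyw rfl; exact hy1 rfl
            · exact Or.inl (Or.inr rfl)
    · -- w' uncovered by N : augmenting base case
      left
      have hkey : ∀ v ∈ e, ¬ Cov N v := by
        intro v hv
        rcases (by rw [hee] at hv; exact Sym2.mem_iff.1 hv : v = w ∨ v = w') with rfl | rfl
        · exact hNw
        · exact hc
      exact ⟨insert e N, base_left hN heM hwe hkey⟩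


noncomputable def nuP (E₀ : Finset (Sym2 V)) : ℕ :=
  sSup {n | ∃ M : Finset (Sym2 V), (M ⊆ E₀ ∧ PW M) ∧ M.card = n}

lemma nuP_bdd (E₀ : Finset (Sym2 V)) :
    BddAbove {n | ∃ M : Finset (Sym2 V), (M ⊆ E₀ ∧ PW M) ∧ M.card = n} := by
  refine ⟨E₀.card, ?_⟩
  rintro n ⟨M, ⟨hs, -⟩, rfl⟩
  exact Finset.card_le_card hs

lemma exists_nuP (E₀ : Finset (Sym2 V)) :
    ∃ M : Finset (Sym2 V), M ⊆ E₀ ∧ PW M ∧ M.card = nuP E₀ := by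
  have h0 : (0 : ℕ) ∈ {n | ∃ M : Finset (Sym2 V), (M ⊆ E₀ ∧ PW M) ∧ M.card = n} :=
    ⟨∅, ⟨Finset.empty_subset _, fun e he => absurd he (Finset.notMem_empty e)⟩,
      Finset.card_empty⟩
  obtain ⟨M, ⟨h1, h2⟩, h3⟩ := Nat.sSup_mem ⟨0, h0⟩ (nuP_bdd E₀)
  exact ⟨M, h1, h2, h3⟩

lemma le_nuP {E₀ M : Finset (Sym2 V)} (h1 : M ⊆ E₀) (h2 : PW M) : M.card ≤ nuP E₀ :=
  le_csSup (nuP_bdd E₀) ⟨M, ⟨h1, h2⟩, rfl⟩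

lemma isMatchingFinset_iff [Fintype V] {G : SimpleGraph V} {M : Finset (Sym2 V)} :
    IsMatchingFinset G M ↔ (M ⊆ G.edgeFinset ∧ PW M) := by
  unfold IsMatchingFinset PW
  constructor
  · rintro ⟨h1, h2⟩
    exact ⟨fun e he => SimpleGraph.mem_edgeFinset.2 (h1 he), h2⟩
  · rintro ⟨h1, h2⟩
    exact ⟨fun e he => SimpleGraph.mem_edgeFinset.1 (h1 he), h2⟩

lemma matchingNumber_eq_nuP [Fintype V] (G : SimpleGraph V) :
    matchingNumber G = nuP G.edgeFinset := by
  unfold matchingNumber nuP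
  congr 1
  ext n
  simp only [Set.mem_setOf_eq]
  constructor
  · rintro ⟨M, h1, h2⟩; exact ⟨M, isMatchingFinset_iff.1 h1, h2⟩
  · rintro ⟨M, h1, h2⟩; exact ⟨M, isMatchingFinset_iff.2 h1, h2⟩

lemma sym2_filter_card_le (S : Finset V) (e : Sym2 V) :
    (S.filter (fun v => v ∈ e)).card ≤ 2 := by
  induction e with
  | _ a b =>
    have hsub : S.filter (fun v => v ∈ s(a, b)) ⊆ insert a {b} := by
      intro v hv
      rcases Sym2.mem_iff.1 (Finset.mem_filter.1 hv).2 with rfl | rfl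
      · exact Finset.mem_insert_self _ _
      · exact Finset.mem_insert_of_mem (Finset.mem_singleton_self _)
    exact (Finset.card_le_card hsub).trans
      ((Finset.card_insert_le _ _).trans (by simp))

lemma covered_card_le (S : Finset V) (W : Finset (Sym2 V)) :
    (S.filter (fun v => Cov W v)).card ≤ 2 * W.card := by
  classical
  have hsub : S.filter (fun v => Cov W v) ⊆ W.biUnion (fun e => S.filter (fun v => v ∈ e)) := by
    intro v hv
    obtain ⟨hvS, e, he, hve⟩ := Finset.mem_filter.1 hv
    exact Finset.mem_biUnion.2 ⟨e, he, Finset.mem_filter.2 ⟨hvS, hve⟩⟩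
  calc (S.filter (fun v => Cov W v)).card
      ≤ _ := Finset.card_le_card hsub
    _ ≤ ∑ e ∈ W, (S.filter (fun v => v ∈ e)).card := Finset.card_biUnion_le
    _ ≤ ∑ _e ∈ W, 2 := Finset.sum_le_sum (fun e _ => sym2_filter_card_le S e)
    _ = 2 * W.card := by rw [Finset.sum_const, smul_eq_mul, mul_comm]

lemma two_missed {S : Finset V} {W : Finset (Sym2 V)} (h : 2 * W.card + 2 ≤ S.card) :
    ∃ u ∈ S, ∃ v ∈ S, u ≠ v ∧ ¬ Cov W u ∧ ¬ Cov W v := by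
  classical
  have hcc := covered_card_le S W
  have hsplit := Finset.card_filter_add_card_filter_not
    (s := S) (p := fun v => Cov W v)
  have h2 : 1 < (S.filter (fun v => ¬ Cov W v)).card := by omega
  obtain ⟨u, hu, v, hv, huv⟩ := Finset.one_lt_card.1 h2
  obtain ⟨huS, hucov⟩ := Finset.mem_filter.1 hu
  obtain ⟨hvS, hvcov⟩ := Finset.mem_filter.1 hv
  exact ⟨u, huS, v, hvS, huv, hucov, hvcov⟩


lemma gallai [Fintype V] (G : SimpleGraph V) (S : Finset V) (E₀ : Finset (Sym2 V))
    (hE₀ : E₀ ⊆ G.edgeFinset)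
    (hES : ∀ e ∈ E₀, ∀ v ∈ e, v ∈ S)
    (hcl : ∀ a b : V, a ∈ S → G.Adj a b → b ∈ S ∧ s(a, b) ∈ E₀)
    (hconn : ∀ a b : V, a ∈ S → b ∈ S → G.Reachable a b)
    (hstar : ∀ v ∈ S, ∃ W : Finset (Sym2 V),
      W ⊆ E₀ ∧ PW W ∧ W.card = nuP E₀ ∧ ¬ Cov W v) :
    S.card ≤ 2 * nuP E₀ + 1 := by
  classical
  by_contra hbig
  push_neg at hbig
  set m := nuP E₀ with hm
  have hdiag : ∀ (W : Finset (Sym2 V)), W ⊆ E₀ → ∀ e ∈ W, ¬ e.IsDiag := by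
    intro W hW e he
    exact (SimpleGraph.not_isDiag_of_mem_edgeSet G
      (SimpleGraph.mem_edgeFinset.1 (hE₀ (hW he))))
  set T : Set ℕ := {d | ∃ u v : V, ∃ W : Finset (Sym2 V), u ∈ S ∧ v ∈ S ∧ u ≠ v ∧
    W ⊆ E₀ ∧ PW W ∧ W.card = m ∧ ¬ Cov W u ∧ ¬ Cov W v ∧ d = G.dist u v} with hT
  have hTne : T.Nonempty := by
    obtain ⟨W, hW1, hW2, hW3⟩ := exists_nuP E₀
    obtain ⟨u, hu, v, hv, huv, hcu, hcv⟩ := two_missed (W := W) (S := S) (by omega)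
    exact ⟨G.dist u v, u, v, W, hu, hv, huv, hW1, hW2, hW3, hcu, hcv, rfl⟩
  obtain ⟨u, v, W, hu, hv, huv, hW1, hW2, hW3, hcu, hcv, hdm⟩ := Nat.sInf_mem hTne
  set dmin := sInf T with hdmin
  have hreach : G.Reachable u v := hconn u v hu hv
  have hdpos : 0 < G.dist u v := hreach.pos_dist_of_ne huv
  rcases Nat.lt_or_ge (G.dist u v) 2 with hlt2 | hge2
  · -- dist = 1 : u, v adjacent, enlarge W
    have h1 : G.dist u v = 1 := by omega
    obtain ⟨p, hp⟩ := hreach.exists_walk_length_eq_dist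
    rw [h1] at hp
    have hadj : G.Adj u v := by
      cases p with
      | nil => simp at hp
      | cons h q =>
        rw [SimpleGraph.Walk.length_cons] at hp
        have : q.length = 0 := by omega
        have := SimpleGraph.Walk.eq_of_length_eq_zero this
        subst this
        exact h
    have hkey : ∀ x ∈ s(u, v), ¬ Cov W x := by
      intro x hx
      rcases Sym2.mem_iff.1 hx with rfl | rfl
      · exact hcu
      · exact hcv
    have heW : s(u, v) ∉ W := fun h => hcu ⟨_, h, Sym2.mem_mk_left u v⟩
    have : (insert s(u, v) W).card ≤ m :=
      le_nuP (Finset.insert_subset (hcl u v hu hadj).2 hW1) (pw_insert hW2 hkey)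
    rw [Finset.card_insert_of_notMem heW, hW3] at this
    omega
  · -- dist ≥ 2
    obtain ⟨p, hp⟩ := hreach.exists_walk_length_eq_dist
    cases p with
    | nil => rw [SimpleGraph.Walk.length_nil] at hp; omega
    | @cons _ w _ hadj q =>
      rw [SimpleGraph.Walk.length_cons] at hp
      have hwS : w ∈ S := (hcl u w hu hadj).1
      have hwu : w ≠ u := fun h => G.irrefl (h ▸ hadj)
      have hwv : w ≠ v := by
        rintro rfl
        have : G.dist u w ≤ 1 := by
          have := SimpleGraph.dist_le (SimpleGraph.Walk.cons hadj SimpleGraph.Walk.nil)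
          simpa using this
        omega
      have hduw : G.dist u w ≤ 1 := by
        have := SimpleGraph.dist_le (SimpleGraph.Walk.cons hadj SimpleGraph.Walk.nil)
        simpa using this
      have hdwv : G.dist w v ≤ G.dist u v - 1 := by
        have := SimpleGraph.dist_le q
        omega
      -- w must be covered by W
      have hcw : Cov W w := by
        by_contra hcw
        have hmem : G.dist u w ∈ T :=
          ⟨u, w, W, hu, hwS, hwu.symm, hW1, hW2, hW3, hcu, hcw, rfl⟩
        have := Nat.sInf_le hmem
        omega
      obtain ⟨N, hN1, hN2, hN3, hNw⟩ := hstar w hwS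
      rcases swap_lemma N.card W N le_rfl hW2 hN2 (hdiag W hW1) (hdiag N hN1) w hcw hNw with
        ⟨N', hsub, hpw, hcard⟩ | ⟨M', x, hsub, hpw, hcard, hxW, hxN, hcov⟩
      · have : N'.card ≤ m :=
          le_nuP (hsub.trans (Finset.union_subset hW1 hN1)) hpw
        omega
      · have hxS : x ∈ S := by
          obtain ⟨e, he, hxe⟩ := hxN
          exact hES e (hN1 he) x hxe
        have hxw : x ≠ w := fun h => hNw (h ▸ hxN)
        have hMw : ¬ Cov M' w := by
          rw [hcov w]
          rintro (⟨-, h⟩ | h)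
          · exact h rfl
          · exact hxw h.symm
        have hMsub : M' ⊆ E₀ := hsub.trans (Finset.union_subset hW1 hN1)
        by_cases hxu : x = u
        · -- use pair (w, v)
          have hMv : ¬ Cov M' v := by
            rw [hcov v]
            rintro (⟨h, -⟩ | h)
            · exact hcv h
            · exact huv (hxu ▸ h.symm)
          have hmem : G.dist w v ∈ T :=
            ⟨w, v, M', hwS, hv, hwv, hMsub, hpw, hcard.trans hW3, hMw, hMv, rfl⟩
          have := Nat.sInf_le hmem
          omega
        · -- use pair (u, w)
          have hMu : ¬ Cov M' u := by
            rw [hcov u]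
            rintro (⟨h, -⟩ | h)
            · exact hcu h
            · exact hxu h.symm
          have hmem : G.dist u w ∈ T :=
            ⟨u, w, M', hu, hwS, hwu.symm, hMsub, hpw, hcard.trans hW3, hMu, hMw, rfl⟩
          have := Nat.sInf_le hmem
          omega


lemma sym2_nonempty (e : Sym2 V) : ∃ a, a ∈ e := by
  induction e with
  | _ a b => exact ⟨a, Sym2.mem_mk_left a b⟩

noncomputable def pick (e : Sym2 V) : V := Classical.choose (sym2_nonempty e)

lemma pick_mem (e : Sym2 V) : pick e ∈ e := Classical.choose_spec (sym2_nonempty e)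

variable [Fintype V] (G : SimpleGraph V)

lemma same_comp {e : Sym2 V} (he : e ∈ G.edgeFinset) {a b : V} (ha : a ∈ e) (hb : b ∈ e) :
    G.connectedComponentMk a = G.connectedComponentMk b := by
  induction e with
  | _ x y =>
    have hadj : G.Adj x y := (SimpleGraph.mem_edgeSet G).1 (SimpleGraph.mem_edgeFinset.1 he)
    have hxy : G.connectedComponentMk x = G.connectedComponentMk y :=
      SimpleGraph.ConnectedComponent.sound hadj.reachable
    rcases Sym2.mem_iff.1 ha with rfl | rfl <;> rcases Sym2.mem_iff.1 hb with rfl | rfl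
    · rfl
    · exact hxy
    · exact hxy.symm
    · rfl

noncomputable def Sc (c : G.ConnectedComponent) : Finset V :=
  Finset.univ.filter (fun v => G.connectedComponentMk v = c)

noncomputable def Ec (c : G.ConnectedComponent) : Finset (Sym2 V) :=
  G.edgeFinset.filter (fun e => ∀ v ∈ e, G.connectedComponentMk v = c)

lemma mem_Sc {c : G.ConnectedComponent} {v : V} :
    v ∈ Sc G c ↔ G.connectedComponentMk v = c := by
  simp [Sc]

lemma mem_Ec {c : G.ConnectedComponent} {e : Sym2 V} :
    e ∈ Ec G c ↔ e ∈ G.edgeFinset ∧ ∀ v ∈ e, G.connectedComponentMk v = c := by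
  simp [Ec]

lemma edge_card_sum :
    G.edgeFinset.card = ∑ c : G.ConnectedComponent, (Ec G c).card := by
  classical
  have h := Finset.card_eq_sum_card_fiberwise
    (f := fun e => G.connectedComponentMk (pick e)) (s := G.edgeFinset)
    (t := Finset.univ) (fun x _ => Finset.mem_univ _)
  rw [h]
  refine Finset.sum_congr rfl (fun c _ => ?_)
  congr 1
  ext e
  rw [Finset.mem_filter, mem_Ec]
  constructor
  · rintro ⟨he, hc⟩
    exact ⟨he, fun v hv => (same_comp G he hv (pick_mem e)).trans hc⟩
  · rintro ⟨he, hall⟩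
    exact ⟨he, hall _ (pick_mem e)⟩

lemma Ec_subset (c : G.ConnectedComponent) : Ec G c ⊆ G.edgeFinset :=
  Finset.filter_subset _ _

lemma nu_sum : ∑ c : G.ConnectedComponent, nuP (Ec G c) ≤ nuP G.edgeFinset := by
  classical
  choose Wc hW1 hW2 hW3 using fun c : G.ConnectedComponent => exists_nuP (Ec G c)
  have hdisj : ∀ c ∈ (Finset.univ : Finset G.ConnectedComponent), ∀ c' ∈ Finset.univ,
      c ≠ c' → Disjoint (Wc c) (Wc c') := by
    intro c _ c' _ hcc'
    rw [Finset.disjoint_left]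
    intro e he he'
    have h1 := ((mem_Ec G).1 (hW1 c he)).2 _ (pick_mem e)
    have h2 := ((mem_Ec G).1 (hW1 c' he')).2 _ (pick_mem e)
    exact hcc' (h1 ▸ h2 ▸ rfl)
  set W := Finset.univ.biUnion Wc with hW
  have hWcard : W.card = ∑ c : G.ConnectedComponent, nuP (Ec G c) := by
    rw [hW, Finset.card_biUnion hdisj]
    exact Finset.sum_congr rfl (fun c _ => hW3 c)
  have hWsub : W ⊆ G.edgeFinset := by
    intro e he
    obtain ⟨c, -, hc⟩ := Finset.mem_biUnion.1 he
    exact Ec_subset G c (hW1 c hc)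
  have hWpw : PW W := by
    intro e he f hf hef v hv
    obtain ⟨c, -, hc⟩ := Finset.mem_biUnion.1 he
    obtain ⟨c', -, hc'⟩ := Finset.mem_biUnion.1 hf
    rcases eq_or_ne c c' with rfl | hcc'
    · exact hW2 c e hc f hc' hef v hv
    · have h1 := ((mem_Ec G).1 (hW1 c hc)).2 v hv.1
      have h2 := ((mem_Ec G).1 (hW1 c' hc')).2 v hv.2
      exact hcc' (h1 ▸ h2 ▸ rfl)
  calc ∑ c : G.ConnectedComponent, nuP (Ec G c) = W.card := hWcard.symm
    _ ≤ nuP G.edgeFinset := le_nuP hWsub hWpw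

lemma comp_star (c : G.ConnectedComponent)
    (hstarG : ∀ v : V, ∃ M : Finset (Sym2 V),
      M ⊆ G.edgeFinset ∧ PW M ∧ M.card = nuP G.edgeFinset ∧ ¬ Cov M v) :
    ∀ v ∈ Sc G c, ∃ W : Finset (Sym2 V),
      W ⊆ Ec G c ∧ PW W ∧ W.card = nuP (Ec G c) ∧ ¬ Cov W v := by
  classical
  intro v hv
  obtain ⟨M, hM1, hM2, hM3, hM4⟩ := hstarG v
  set Win := M.filter (fun e => ∀ x ∈ e, G.connectedComponentMk x = c) with hWin
  set Mout := M.filter (fun e => ¬ ∀ x ∈ e, G.connectedComponentMk x = c) with hMout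
  have hsplit : Win.card + Mout.card = M.card :=
    Finset.card_filter_add_card_filter_not _
  have hWinsub : Win ⊆ Ec G c := by
    intro e he
    obtain ⟨heM, hall⟩ := Finset.mem_filter.1 he
    exact (mem_Ec G).2 ⟨hM1 heM, hall⟩
  have hWinpw : PW Win := hM2.mono (Finset.filter_subset _ _)
  have hle : Win.card ≤ nuP (Ec G c) := le_nuP hWinsub hWinpw
  have hge : nuP (Ec G c) ≤ Win.card := by
    by_contra hlt
    push_neg at hlt
    obtain ⟨Wmax, hX1, hX2, hX3⟩ := exists_nuP (Ec G c)
    have hkey : ∀ e ∈ Wmax, ∀ f ∈ Mout, ∀ x : V, ¬(x ∈ e ∧ x ∈ f) := by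
      rintro e he f hf x ⟨hxe, hxf⟩
      obtain ⟨hfM, hnall⟩ := Finset.mem_filter.1 hf
      refine hnall (fun y hy => ?_)
      have h1 := same_comp G (hM1 hfM) hy hxf
      have h2 := ((mem_Ec G).1 (hX1 he)).2 x hxe
      exact h1.trans h2
    have hdisj : Disjoint Wmax Mout := by
      rw [Finset.disjoint_left]
      intro e he he'
      exact hkey e he e he' (pick e) ⟨pick_mem e, pick_mem e⟩
    have hpw : PW (Wmax ∪ Mout) := by
      intro e he f hf hef x hx
      rcases Finset.mem_union.1 he with he' | he' <;> rcases Finset.mem_union.1 hf with hf' | hf'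
      · exact hX2 e he' f hf' hef x hx
      · exact hkey e he' f hf' x hx
      · exact hkey f hf' e he' x ⟨hx.2, hx.1⟩
      · exact hM2 e (Finset.filter_subset _ _ he') f (Finset.filter_subset _ _ hf') hef x hx
    have hsub : Wmax ∪ Mout ⊆ G.edgeFinset :=
      Finset.union_subset ((hX1).trans (Ec_subset G c)) (Finset.filter_subset _ _ |>.trans hM1)
    have hcard : (Wmax ∪ Mout).card = Wmax.card + Mout.card :=
      Finset.card_union_of_disjoint hdisj
    have := le_nuP hsub hpw
    rw [hcard, hX3] at this
    omega
  refine ⟨Win, hWinsub, hWinpw, le_antisymm hle hge, fun h => hM4 ?_⟩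
  obtain ⟨e, he, hve⟩ := h
  exact ⟨e, Finset.filter_subset _ _ he, hve⟩

lemma comp_count (c : G.ConnectedComponent) :
    ∑ v ∈ Sc G c, ((Ec G c).filter (fun e => v ∈ e)).card = 2 * (Ec G c).card := by
  classical
  have hexch : ∑ v ∈ Sc G c, ((Ec G c).filter (fun e => v ∈ e)).card
      = ∑ e ∈ Ec G c, ((Sc G c).filter (fun v => v ∈ e)).card := by
    simp only [Finset.card_filter]
    exact Finset.sum_comm
  rw [hexch]
  rw [Finset.sum_congr rfl (fun e he => ?_), Finset.sum_const, smul_eq_mul, mul_comm]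
  -- per edge within the component, exactly 2 endpoints in Sc
  obtain ⟨heE, hall⟩ := (mem_Ec G).1 he
  have hnd : ¬ e.IsDiag :=
    SimpleGraph.not_isDiag_of_mem_edgeSet G (SimpleGraph.mem_edgeFinset.1 heE)
  induction e with
  | _ a b =>
    have hab : a ≠ b := fun h => hnd (Sym2.mk_isDiag_iff.2 h)
    have : (Sc G c).filter (fun v => v ∈ s(a, b)) = {a, b} := by
      ext v
      rw [Finset.mem_filter, Finset.mem_insert, Finset.mem_singleton]
      constructor
      · rintro ⟨-, hv⟩
        exact Sym2.mem_iff.1 hv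
      · rintro (rfl | rfl)
        · exact ⟨(mem_Sc G).2 (hall v (Sym2.mem_mk_left _ _)), Sym2.mem_mk_left _ _⟩
        · exact ⟨(mem_Sc G).2 (hall v (Sym2.mem_mk_right _ _)), Sym2.mem_mk_right _ _⟩
    rw [this, Finset.card_insert_of_notMem (by simpa using hab), Finset.card_singleton]

lemma comp_filter_le_degree (c : G.ConnectedComponent) (v : V) :
    ((Ec G c).filter (fun e => v ∈ e)).card ≤ G.degree v := by
  classical
  rw [← SimpleGraph.card_incidenceFinset_eq_degree]
  refine Finset.card_le_card ?_
  intro e he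
  obtain ⟨heE, hve⟩ := Finset.mem_filter.1 he
  rw [SimpleGraph.mem_incidenceFinset]
  exact ⟨SimpleGraph.mem_edgeFinset.1 (Ec_subset G c heE), hve⟩

lemma degree_le_Sc (c : G.ConnectedComponent) {v : V} (hv : v ∈ Sc G c) :
    G.degree v ≤ (Sc G c).card - 1 := by
  classical
  rw [← SimpleGraph.card_neighborFinset_eq_degree]
  have hsub : G.neighborFinset v ⊆ (Sc G c).erase v := by
    intro u hu
    have hadj : G.Adj v u := (SimpleGraph.mem_neighborFinset G v u).1 hu
    refine Finset.mem_erase.2 ⟨fun h => G.irrefl (h ▸ hadj), ?_⟩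
    rw [mem_Sc]
    exact (SimpleGraph.ConnectedComponent.sound hadj.reachable).symm.trans ((mem_Sc G).1 hv)
  exact (Finset.card_le_card hsub).trans (le_of_eq (Finset.card_erase_of_mem hv))

lemma comp_bound1 (c : G.ConnectedComponent) :
    2 * (Ec G c).card ≤ G.maxDegree * (Sc G c).card := by
  rw [← comp_count G c]
  calc ∑ v ∈ Sc G c, ((Ec G c).filter (fun e => v ∈ e)).card
      ≤ ∑ _v ∈ Sc G c, G.maxDegree := Finset.sum_le_sum (fun v _ =>
        (comp_filter_le_degree G c v).trans (G.degree_le_maxDegree v))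
    _ = G.maxDegree * (Sc G c).card := by rw [Finset.sum_const, smul_eq_mul, mul_comm]

lemma comp_bound2 (c : G.ConnectedComponent) :
    2 * (Ec G c).card ≤ ((Sc G c).card - 1) * (Sc G c).card := by
  rw [← comp_count G c]
  calc ∑ v ∈ Sc G c, ((Ec G c).filter (fun e => v ∈ e)).card
      ≤ ∑ _v ∈ Sc G c, ((Sc G c).card - 1) := Finset.sum_le_sum (fun v hv =>
        (comp_filter_le_degree G c v).trans (degree_le_Sc G c hv))
    _ = ((Sc G c).card - 1) * (Sc G c).card := by rw [Finset.sum_const, smul_eq_mul, mul_comm]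

lemma comp_gallai (c : G.ConnectedComponent)
    (hstarG : ∀ v : V, ∃ M : Finset (Sym2 V),
      M ⊆ G.edgeFinset ∧ PW M ∧ M.card = nuP G.edgeFinset ∧ ¬ Cov M v) :
    (Sc G c).card ≤ 2 * nuP (Ec G c) + 1 := by
  refine gallai G (Sc G c) (Ec G c) (Ec_subset G c)
    (fun e he v hv => (mem_Sc G).2 (((mem_Ec G).1 he).2 v hv)) ?_ ?_ (comp_star G c hstarG)
  · intro a b ha hadj
    have hab : G.connectedComponentMk a = G.connectedComponentMk b :=
      SimpleGraph.ConnectedComponent.sound hadj.reachable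
    have hbc : G.connectedComponentMk b = c := hab.symm.trans ((mem_Sc G).1 ha)
    refine ⟨(mem_Sc G).2 hbc, (mem_Ec G).2 ⟨SimpleGraph.mem_edgeFinset.2 ((SimpleGraph.mem_edgeSet G).2 hadj), ?_⟩⟩
    intro v hv
    rcases Sym2.mem_iff.1 hv with rfl | rfl
    · exact (mem_Sc G).1 ha
    · exact hbc
  · intro a b ha hb
    exact SimpleGraph.ConnectedComponent.exact (((mem_Sc G).1 ha).trans ((mem_Sc G).1 hb).symm)


lemma mem_incSet_iff {G : SimpleGraph V} {v : V} {e : Sym2 V} :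
    e ∈ G.incidenceSet v ↔ e ∈ G.edgeSet ∧ v ∈ e := Iff.rfl

def rhs (D n : ℕ) : ℕ := D * n + n / ((D + 1) / 2) * (D / 2)

lemma rhs_mono_right {D n n' : ℕ} (h : n ≤ n') : rhs D n ≤ rhs D n' :=
  add_le_add (mul_le_mul_right h D) (mul_le_mul_left (Nat.div_le_div_right h) _)

lemma rhs_succ_left (D n : ℕ) : rhs D n ≤ rhs (D + 1) n := by
  obtain ⟨r, hr | hr⟩ := Nat.even_or_odd' D
  · subst hr
    unfold rhs
    have h1 : (2 * r + 1) / 2 = r := by omega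
    have h2 : (2 * r) / 2 = r := by omega
    have h3 : (2 * r + 1 + 1) / 2 = r + 1 := by omega
    rw [h1, h2, h3]
    have hd : n / r * r ≤ n := Nat.div_mul_le_self n r
    calc 2 * r * n + n / r * r ≤ 2 * r * n + n := Nat.add_le_add_left hd _
      _ ≤ (2 * r * n + n) + n / (r + 1) * r := Nat.le_add_right _ _
      _ = (2 * r + 1) * n + n / (r + 1) * r := by ring
  · subst hr
    unfold rhs
    have h1 : (2 * r + 1 + 1) / 2 = r + 1 := by omega
    have h2 : (2 * r + 1) / 2 = r := by omega
    have h3 : (2 * r + 1 + 1 + 1) / 2 = r + 1 := by omega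
    rw [h1, h2, h3]
    exact add_le_add (mul_le_mul_left (by omega) n)
      (mul_le_mul_right (by omega) _)

lemma rhs_mono {D D' n n' : ℕ} (hD : D ≤ D') (hn : n ≤ n') : rhs D n ≤ rhs D' n' := by
  induction D', hD using Nat.le_induction with
  | base => exact rhs_mono_right hn
  | succ D' _ ih => exact ih.trans (rhs_succ_left D' n')

lemma rhs_step (D n : ℕ) : rhs D n + D ≤ rhs D (n + 1) := by
  unfold rhs
  have h1 : n / ((D + 1) / 2) ≤ (n + 1) / ((D + 1) / 2) :=
    Nat.div_le_div_right (Nat.le_succ n)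
  calc D * n + n / ((D + 1) / 2) * (D / 2) + D
      = (D * (n + 1)) + n / ((D + 1) / 2) * (D / 2) := by ring
    _ ≤ (D * (n + 1)) + (n + 1) / ((D + 1) / 2) * (D / 2) :=
        Nat.add_le_add_left (mul_le_mul_left h1 _) _

lemma main_aux [Fintype V] : ∀ (k : ℕ) (G : SimpleGraph V), G.edgeFinset.card ≤ k →
    G.edgeFinset.card ≤ rhs G.maxDegree (nuP G.edgeFinset) := by
  intro k
  induction k with
  | zero => exact fun G h => le_trans h (Nat.zero_le _)
  | succ k IH =>
    intro G hk
    rcases Nat.eq_zero_or_pos G.edgeFinset.card with h0 | hpos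
    · rw [h0]; exact Nat.zero_le _
    set ν := nuP G.edgeFinset with hν
    by_cases hcase : ∃ v : V, 0 < G.degree v ∧
        nuP (G.deleteEdges (G.incidenceSet v)).edgeFinset < ν
    · obtain ⟨v, hdeg, hlt⟩ := hcase
      set G' := G.deleteEdges (G.incidenceSet v) with hG'
      have hEG' : G'.edgeFinset = G.edgeFinset \ G.incidenceFinset v := by
        ext e
        rw [SimpleGraph.mem_edgeFinset, hG', SimpleGraph.edgeSet_deleteEdges,
          Set.mem_diff, Finset.mem_sdiff, SimpleGraph.mem_edgeFinset,
          SimpleGraph.mem_incidenceFinset]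
      have hsub : G.incidenceFinset v ⊆ G.edgeFinset := by
        intro e he
        rw [SimpleGraph.mem_incidenceFinset] at he
        exact SimpleGraph.mem_edgeFinset.2 he.1
      have hcard' : G'.edgeFinset.card = G.edgeFinset.card - G.degree v := by
        rw [hEG', Finset.card_sdiff_of_subset hsub, SimpleGraph.card_incidenceFinset_eq_degree]
      have hdegle : G.degree v ≤ G.maxDegree := G.degree_le_maxDegree v
      have hdegle2 : G.degree v ≤ G.edgeFinset.card := by
        rw [← SimpleGraph.card_incidenceFinset_eq_degree]
        exact Finset.card_le_card hsub
      have hk' : G'.edgeFinset.card ≤ k := by omega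
      have hIH : G'.edgeFinset.card ≤ rhs G'.maxDegree (nuP G'.edgeFinset) := by convert IH G' (by convert hk')
      have hmax' : G'.maxDegree ≤ G.maxDegree := by
        apply SimpleGraph.maxDegree_le_of_forall_degree_le
        intro w
        refine le_trans ?_ (G.degree_le_maxDegree w)
        rw [← SimpleGraph.card_neighborFinset_eq_degree,
          ← SimpleGraph.card_neighborFinset_eq_degree]
        apply Finset.card_le_card
        intro u hu
        rw [SimpleGraph.mem_neighborFinset] at hu ⊢
        rw [hG', SimpleGraph.deleteEdges_adj] at hu
        exact hu.1
      have hν1 : 1 ≤ ν := by omega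
      have hνle : nuP G'.edgeFinset ≤ ν - 1 := by
        rw [show nuP G'.edgeFinset = nuP (G.deleteEdges (G.incidenceSet v)).edgeFinset by congr!]; omega
      have hstep := rhs_step G.maxDegree (ν - 1)
      rw [Nat.sub_add_cancel hν1] at hstep
      calc G.edgeFinset.card = G'.edgeFinset.card + G.degree v := by omega
        _ ≤ rhs G'.maxDegree (nuP G'.edgeFinset) + G.degree v := add_le_add_left hIH _
        _ ≤ rhs G.maxDegree (ν - 1) + G.maxDegree := add_le_add (rhs_mono hmax' hνle) hdegle
        _ ≤ rhs G.maxDegree ν := hstep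
    · push_neg at hcase
      have hstarG : ∀ w : V, ∃ M : Finset (Sym2 V),
          M ⊆ G.edgeFinset ∧ PW M ∧ M.card = nuP G.edgeFinset ∧ ¬ Cov M w := by
        intro w
        by_cases hdw : 0 < G.degree w
        · have hge := hcase w hdw
          set Ew := (G.deleteEdges (G.incidenceSet w)).edgeFinset with hEw
          obtain ⟨M, hM1, hM2, hM3⟩ := exists_nuP Ew
          have hEwsub : Ew ⊆ G.edgeFinset := by
            intro e he
            rw [hEw, SimpleGraph.mem_edgeFinset, SimpleGraph.edgeSet_deleteEdges] at he
            exact SimpleGraph.mem_edgeFinset.2 he.1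
          have hcardle : M.card ≤ ν := le_nuP (hM1.trans hEwsub) hM2
          have hMν : M.card = ν := le_antisymm hcardle (by omega)
          refine ⟨M, hM1.trans hEwsub, hM2, hMν, ?_⟩
          rintro ⟨e, he, hwe⟩
          have hmem := hM1 he
          rw [hEw, SimpleGraph.mem_edgeFinset, SimpleGraph.edgeSet_deleteEdges] at hmem
          exact hmem.2 (mem_incSet_iff.2 ⟨hmem.1, hwe⟩)
        · obtain ⟨M, hM1, hM2, hM3⟩ := exists_nuP G.edgeFinset
          refine ⟨M, hM1, hM2, hM3, ?_⟩
          rintro ⟨e, he, hwe⟩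
          have heE := SimpleGraph.mem_edgeFinset.1 (hM1 he)
          apply hdw
          rw [G.degree_pos_iff_exists_adj]
          induction e with
          | _ a b =>
            have hadj : G.Adj a b := (SimpleGraph.mem_edgeSet G).1 heE
            rcases Sym2.mem_iff.1 hwe with rfl | rfl
            · exact ⟨b, hadj⟩
            · exact ⟨a, hadj.symm⟩
      have hΔ : 1 ≤ G.maxDegree := by
        obtain ⟨e, he⟩ := Finset.card_pos.1 hpos
        have heE := SimpleGraph.mem_edgeFinset.1 he
        obtain ⟨a, ha⟩ : ∃ a, 0 < G.degree a := by
          induction e with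
          | _ a b =>
            exact ⟨a, (G.degree_pos_iff_exists_adj a).2
              ⟨b, (SimpleGraph.mem_edgeSet G).1 heE⟩⟩
        exact le_trans ha (G.degree_le_maxDegree a)
      set Δ := G.maxDegree with hΔdef
      set kk := (Δ + 1) / 2 with hkkdef
      set dd := Δ / 2 with hdddef
      have hkk : 1 ≤ kk := by omega
      have hper : ∀ c : G.ConnectedComponent,
          (Ec G c).card ≤ Δ * nuP (Ec G c) + (if kk ≤ nuP (Ec G c) then dd else 0) := by
        intro c
        have hgal := comp_gallai G c hstarG
        by_cases hbig : kk ≤ nuP (Ec G c)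
        · rw [if_pos hbig]
          have h1 := comp_bound1 G c
          rw [← hΔdef] at h1
          have h2 : Δ * (Sc G c).card ≤ Δ * (2 * nuP (Ec G c) + 1) :=
            mul_le_mul_right hgal Δ
          have h3 : Δ * (2 * nuP (Ec G c) + 1) = 2 * (Δ * nuP (Ec G c)) + Δ := by ring
          omega
        · rw [if_neg hbig]
          push_neg at hbig
          have hS : (Sc G c).card ≤ Δ := by omega
          have hS1 : (Sc G c).card - 1 ≤ 2 * nuP (Ec G c) := by omega
          have h2 := comp_bound2 G c
          have h3 : ((Sc G c).card - 1) * (Sc G c).card ≤ (2 * nuP (Ec G c)) * Δ :=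
            Nat.mul_le_mul hS1 hS
          have h4 : (2 * nuP (Ec G c)) * Δ = 2 * (Δ * nuP (Ec G c)) := by ring
          omega
      set bad := Finset.univ.filter (fun c : G.ConnectedComponent => kk ≤ nuP (Ec G c))
        with hbad
      have hnusum := nu_sum G
      have hbadcard : bad.card * kk ≤ ν := by
        calc bad.card * kk = ∑ _c ∈ bad, kk := by rw [Finset.sum_const, smul_eq_mul]
          _ ≤ ∑ c ∈ bad, nuP (Ec G c) :=
              Finset.sum_le_sum (fun c hc => (Finset.mem_filter.1 hc).2)
          _ ≤ ∑ c : G.ConnectedComponent, nuP (Ec G c) :=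
              Finset.sum_le_sum_of_subset (Finset.filter_subset _ _)
          _ ≤ ν := hnusum
      have hbadle : bad.card ≤ ν / kk := (Nat.le_div_iff_mul_le hkk).2 hbadcard
      calc G.edgeFinset.card = ∑ c : G.ConnectedComponent, (Ec G c).card := edge_card_sum G
        _ ≤ ∑ c : G.ConnectedComponent,
            (Δ * nuP (Ec G c) + if kk ≤ nuP (Ec G c) then dd else 0) :=
            Finset.sum_le_sum (fun c _ => hper c)
        _ = Δ * (∑ c : G.ConnectedComponent, nuP (Ec G c)) +
            ∑ c : G.ConnectedComponent, (if kk ≤ nuP (Ec G c) then dd else 0) := by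
            rw [Finset.sum_add_distrib, Finset.mul_sum]
        _ = Δ * (∑ c : G.ConnectedComponent, nuP (Ec G c)) + bad.card * dd := by
            congr 1
            rw [hbad, ← Finset.sum_filter, Finset.sum_const, smul_eq_mul]
        _ ≤ Δ * ν + (ν / kk) * dd :=
            add_le_add (mul_le_mul_right hnusum Δ) (mul_le_mul_left hbadle dd)
        _ = rhs Δ ν := rfl

end CH

theorem stmt_0 {V : Type*} [Fintype V] (G : SimpleGraph V)
    (hiso : ∀ v : V, 0 < G.degree v) :
    G.edgeFinset.card ≤
      G.maxDegree * matchingNumber G +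
        (matchingNumber G / ((G.maxDegree + 1) / 2)) * (G.maxDegree / 2) := by
  classical
  have h := CH.main_aux G.edgeFinset.card G le_rfl
  rw [CH.matchingNumber_eq_nuP]
  simpa [CH.rhs] using h
end

section
/- For any simple graph G with maximum degree Δ and maximum matching size ν, |E(G)| ≤ ν·(Δ + ⌊Δ/2⌋/⌈Δ/2⌉), i.e., ⌈Δ/2⌉·|E(G)| ≤ ν·(Δ·⌈Δ/2⌉ + ⌊Δ/2⌋). -/
open scoped Classical

set_option linter.unusedSectionVars false
set_option linter.unusedVariables false

namespace CH
variable {V : Type*} [Fintype V]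

/-- v is covered by the edge-set M -/
def fcov (M : Finset (Sym2 V)) (v : V) : Prop := ∃ e ∈ M, v ∈ e

lemma fcov_mono {M M' : Finset (Sym2 V)} (h : M ⊆ M') {v : V} (hv : fcov M v) : fcov M' v := by
  obtain ⟨e, he, hve⟩ := hv; exact ⟨e, h he, hve⟩

lemma fcov_insert {e : Sym2 V} {M : Finset (Sym2 V)} {v : V} :
    fcov (insert e M) v ↔ fcov M v ∨ v ∈ e := by
  constructor
  · rintro ⟨f, hf, hvf⟩
    rcases Finset.mem_insert.1 hf with rfl | hf
    · exact Or.inr hvf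
    · exact Or.inl ⟨f, hf, hvf⟩
  · rintro (⟨f, hf, hvf⟩ | hv)
    · exact ⟨f, Finset.mem_insert_of_mem hf, hvf⟩
    · exact ⟨e, Finset.mem_insert_self _ _, hv⟩

variable {H : SimpleGraph V}

lemma matching_subset {M M' : Finset (Sym2 V)} (hM : IsMatchingFinset H M) (h : M' ⊆ M) :
    IsMatchingFinset H M' :=
  ⟨fun e he => hM.1 (h (by exact_mod_cast he)),
   fun e he f hf hef v => hM.2 e (h he) f (h hf) hef v⟩

lemma matching_unique {M : Finset (Sym2 V)} (hM : IsMatchingFinset H M) {e f : Sym2 V} {v : V}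
    (he : e ∈ M) (hf : f ∈ M) (hve : v ∈ e) (hvf : v ∈ f) : e = f := by
  by_contra hne
  exact hM.2 e he f hf hne v ⟨hve, hvf⟩

lemma fcov_erase {M : Finset (Sym2 V)} (hM : IsMatchingFinset H M) {f : Sym2 V} (hf : f ∈ M)
    {v : V} : fcov (M.erase f) v ↔ fcov M v ∧ v ∉ f := by
  constructor
  · rintro ⟨e, he, hve⟩
    have heM := Finset.mem_of_mem_erase he
    refine ⟨⟨e, heM, hve⟩, fun hvf => ?_⟩
    exact Finset.ne_of_mem_erase he (matching_unique hM heM hf hve hvf)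
  · rintro ⟨⟨e, he, hve⟩, hvf⟩
    refine ⟨e, Finset.mem_erase.2 ⟨?_, he⟩, hve⟩
    rintro rfl; exact hvf hve

lemma matching_insert {M : Finset (Sym2 V)} (hM : IsMatchingFinset H M) {e : Sym2 V}
    (he : e ∈ H.edgeSet) (hcov : ∀ v ∈ e, ¬ fcov M v) : IsMatchingFinset H (insert e M) := by
  constructor
  · intro f hf
    rcases Finset.mem_insert.1 (by exact_mod_cast hf) with rfl | hf
    · exact he
    · exact hM.1 hf
  · intro f hf g hg hfg v hv
    rcases Finset.mem_insert.1 hf with hf' | hf' <;> rcases Finset.mem_insert.1 hg with hg' | hg'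
    · exact hfg (hf'.trans hg'.symm)
    · exact hcov v (hf' ▸ hv.1) ⟨g, hg', hv.2⟩
    · exact hcov v (hg' ▸ hv.2) ⟨f, hf', hv.1⟩
    · exact hM.2 f hf' g hg' hfg v hv

lemma edge_decomp {e : Sym2 V} (he : e ∈ H.edgeSet) {u : V} (hu : u ∈ e) :
    ∃ x, x ≠ u ∧ e = s(u, x) ∧ H.Adj u x := by
  obtain ⟨x, rfl⟩ := Sym2.mem_iff_exists.1 hu
  have hadj : H.Adj u x := (SimpleGraph.mem_edgeSet H).1 he
  exact ⟨x, hadj.ne', rfl, hadj⟩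

lemma matching_card_le {M : Finset (Sym2 V)} (hM : IsMatchingFinset H M) :
    M.card ≤ matchingNumber H := by
  apply le_csSup
  · exact ⟨(Finset.univ : Finset (Sym2 V)).card, fun n ⟨N, _, hcard⟩ => hcard ▸ Finset.card_le_card (Finset.subset_univ N)⟩
  · exact ⟨M, hM, rfl⟩

lemma exists_max_matching (H : SimpleGraph V) :
    ∃ M : Finset (Sym2 V), IsMatchingFinset H M ∧ M.card = matchingNumber H := by
  have h : matchingNumber H ∈ {n | ∃ M : Finset (Sym2 V), IsMatchingFinset H M ∧ M.card = n} := by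
    apply Nat.sSup_mem
    · exact ⟨0, ∅, ⟨by simp, by simp⟩, rfl⟩
    · exact ⟨(Finset.univ : Finset (Sym2 V)).card, fun n ⟨N, _, hcard⟩ => hcard ▸ Finset.card_le_card (Finset.subset_univ N)⟩
  exact h

lemma matchingNumber_mono {H' : SimpleGraph V} (h : H'.edgeSet ⊆ H.edgeSet) :
    matchingNumber H' ≤ matchingNumber H := by
  obtain ⟨M, hM, hcard⟩ := exists_max_matching H'
  rw [← hcard]
  exact matching_card_le ⟨fun e he => h (hM.1 he), hM.2⟩

lemma p_a (a b c d e : Prop) (t1 : b → a) (t2 : c → a) :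
    ((a ∧ ¬(b ∨ c)) ∨ c ∨ e) ∨ (d ∨ b) ↔ a ∨ d ∨ e := by tauto
lemma p_b1 (a b c d f : Prop) (t1 : b → a) (t2 : c → a) (h3 : d → ¬f) (h4 : b → ¬f)
    (h5 : c → ¬f) : (((a ∧ ¬(b ∨ c)) ∨ c) ∧ ¬f) ∨ (d ∨ b) ↔ (a ∨ d) ∧ ¬f := by tauto
lemma p_b2 (a d b c f : Prop) (t1 : b → a) (t2 : c → a) (h3 : b → ¬d) (h4 : c → ¬d) :
    (((a ∧ ¬(d ∨ b)) ∧ ¬c) ∨ f) ∨ (b ∨ c) ↔ (a ∧ ¬d) ∨ f := by tauto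
lemma p_b3 (a b c d : Prop) (t1 : b → a) (h2 : d → ¬c) (h3 : b → ¬c) :
    (a ∧ ¬(b ∨ c)) ∨ (d ∨ b) ↔ (a ∨ d) ∧ ¬c := by tauto
lemma p_b4 (a d b c : Prop) (t1 : b → a) (h2 : b → ¬d) :
    (a ∧ ¬(d ∨ b)) ∨ (b ∨ c) ↔ (a ∧ ¬d) ∨ c := by tauto
lemma engine (H : SimpleGraph V) : ∀ (n : ℕ) (N M : Finset (Sym2 V)) (u : V),
    N.card ≤ n → IsMatchingFinset H M → IsMatchingFinset H N → ¬ fcov M u → fcov N u →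
    (∃ M'' z, IsMatchingFinset H M'' ∧ M''.card = M.card + 1 ∧
      (∀ v, fcov M'' v ↔ fcov M v ∨ v = u ∨ v = z) ∧ fcov N z) ∨
    (∃ y M' N', y ≠ u ∧ fcov M y ∧ ¬ fcov N y ∧ IsMatchingFinset H M' ∧ IsMatchingFinset H N' ∧
      M'.card = M.card ∧ N'.card = N.card ∧
      (∀ v, fcov M' v ↔ ((fcov M v ∨ v = u) ∧ v ≠ y)) ∧
      (∀ v, fcov N' v ↔ ((fcov N v ∧ v ≠ u) ∨ v = y)) ∧
      M ∩ N ⊆ M ∩ N' ∧ ∃ g, g ∈ M ∩ N' ∧ g ∉ N) := by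
  intro n
  induction n with
  | zero =>
    intro N M u hn _ _ _ hNu
    obtain ⟨e, he, -⟩ := hNu
    rw [Nat.le_zero, Finset.card_eq_zero] at hn
    subst hn
    exact absurd he (Finset.notMem_empty e)
  | succ n ih =>
    intro N M u hn hM hN hMu hNu
    obtain ⟨e₁, he₁N, hue₁⟩ := hNu
    have he₁E : e₁ ∈ H.edgeSet := hN.1 he₁N
    obtain ⟨x₁, hx₁u, he₁eq, hadj₁⟩ := edge_decomp he₁E hue₁
    have mem_e₁ : ∀ v : V, v ∈ e₁ ↔ v = u ∨ v = x₁ := fun v => by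
      rw [he₁eq]; exact Sym2.mem_iff
    have hx₁e₁ : x₁ ∈ e₁ := (mem_e₁ x₁).2 (Or.inr rfl)
    have he₁M : e₁ ∉ M := fun h => hMu ⟨e₁, h, hue₁⟩
    have hNx₁ : fcov N x₁ := ⟨e₁, he₁N, hx₁e₁⟩
    by_cases hx₁M : fcov M x₁
    · -- x₁ is M-covered; get its M-edge f₁ = s(x₁, x₂)
      obtain ⟨f₁, hf₁M, hx₁f₁⟩ := hx₁M
      have hx₁M : fcov M x₁ := ⟨f₁, hf₁M, hx₁f₁⟩
      have hf₁E : f₁ ∈ H.edgeSet := hM.1 hf₁M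
      obtain ⟨x₂, hx₂x₁, hf₁eq, hadj₂⟩ := edge_decomp hf₁E hx₁f₁
      have mem_f₁ : ∀ v : V, v ∈ f₁ ↔ v = x₁ ∨ v = x₂ := fun v => by
        rw [hf₁eq]; exact Sym2.mem_iff
      have hx₂f₁ : x₂ ∈ f₁ := (mem_f₁ x₂).2 (Or.inr rfl)
      have hMx₂ : fcov M x₂ := ⟨f₁, hf₁M, hx₂f₁⟩
      have hx₂u : x₂ ≠ u := fun h => hMu (h ▸ hMx₂)
      have he₁f₁ : e₁ ≠ f₁ := by
        intro h
        rcases (mem_f₁ u).1 (h ▸ hue₁) with h' | h'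
        · exact hx₁u h'.symm
        · exact hx₂u h'.symm
      have hf₁N : f₁ ∉ N := fun h => he₁f₁ (matching_unique hN he₁N h hx₁e₁ hx₁f₁)
      have hN₁ : IsMatchingFinset H (N.erase e₁) := matching_subset hN (Finset.erase_subset _ _)
      have covN₁ : ∀ v, fcov (N.erase e₁) v ↔ fcov N v ∧ ¬(v = u ∨ v = x₁) := fun v => by
        rw [fcov_erase hN he₁N, mem_e₁ v]
      have hM₁ : IsMatchingFinset H (M.erase f₁) := matching_subset hM (Finset.erase_subset _ _)
      have covM₁ : ∀ v, fcov (M.erase f₁) v ↔ fcov M v ∧ ¬(v = x₁ ∨ v = x₂) := fun v => by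
        rw [fcov_erase hM hf₁M, mem_f₁ v]
      have hMcardpos : 0 < M.card := Finset.card_pos.2 ⟨f₁, hf₁M⟩
      have hNcardpos : 0 < N.card := Finset.card_pos.2 ⟨e₁, he₁N⟩
      have hcM₁ : (M.erase f₁).card = M.card - 1 := Finset.card_erase_of_mem hf₁M
      have hcN₁ : (N.erase e₁).card = N.card - 1 := Finset.card_erase_of_mem he₁N
      -- transports
      have t1 : ∀ v : V, v = x₁ → fcov M v := fun v h => h ▸ ⟨f₁, hf₁M, hx₁f₁⟩
      have t2 : ∀ v : V, v = x₂ → fcov M v := fun v h => h ▸ hMx₂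
      have u1 : ∀ v : V, v = x₁ → fcov N v := fun v h => h ▸ hNx₁
      by_cases hx₂N₁ : fcov (N.erase e₁) x₂
      · -- recurse along the path
        have hNx₂ : fcov N x₂ := fcov_mono (Finset.erase_subset _ _) hx₂N₁
        have u2 : ∀ v : V, v = x₂ → fcov N v := fun v h => h ▸ hNx₂
        have hcard : (N.erase e₁).card ≤ n := by omega
        have hMx₂' : ¬ fcov (M.erase f₁) x₂ := by
          rw [covM₁]; rintro ⟨-, h⟩; exact h (Or.inr rfl)
        rcases ih (N.erase e₁) (M.erase f₁) x₂ hcard hM₁ hN₁ hMx₂' hx₂N₁ with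
          ⟨M'', z, hm'', hc'', hcov'', hzN₁⟩ |
          ⟨y, M', N', hyx₂, hyM₁, hyN₁, hM', hN', hcM', hcN', covM', covN', hsub, g, hgMN', hgN⟩
        · -- lift case (a)
          left
          have hzN : fcov N z := fcov_mono (Finset.erase_subset _ _) hzN₁
          have hz' := (covN₁ z).1 hzN₁
          have hzu : z ≠ u := fun h => hz'.2 (Or.inl h)
          have hzx₁ : z ≠ x₁ := fun h => hz'.2 (Or.inr h)
          have hu'' : ¬ fcov M'' u := by
            rw [hcov'', covM₁]
            rintro (⟨h, -⟩ | h | h)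
            exacts [hMu h, hx₂u h.symm, hzu h.symm]
          have hx₁'' : ¬ fcov M'' x₁ := by
            rw [hcov'', covM₁]
            rintro (⟨-, h⟩ | h | h)
            exacts [h (Or.inl rfl), hx₂x₁ h.symm, hzx₁ h.symm]
          have he₁M'' : e₁ ∉ M'' := fun h => hu'' ⟨e₁, h, hue₁⟩
          refine ⟨insert e₁ M'', z, matching_insert hm'' he₁E ?_, ?_, ?_, hzN⟩
          · intro v hv
            rcases (mem_e₁ v).1 hv with rfl | rfl
            · exact hu''
            · exact hx₁''
          · rw [Finset.card_insert_of_notMem he₁M'', hc'', hcM₁]; omega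
          · intro v
            rw [fcov_insert, hcov'', covM₁, mem_e₁ v]
            exact p_a _ _ _ _ _ (t1 v) (t2 v)
        · -- lift case (b)
          right
          have hyM : fcov M y := ((covM₁ y).1 hyM₁).1
          have hyu : y ≠ u := fun h => hMu (h ▸ hyM)
          have hyx₁ : y ≠ x₁ := fun h => ((covM₁ y).1 hyM₁).2 (Or.inl h)
          have hyN : ¬ fcov N y := fun h =>
            hyN₁ ((covN₁ y).2 ⟨h, fun hc => hc.elim (fun h' => hyu h') (fun h' => hyx₁ h')⟩)
          have hM'u : ¬ fcov M' u := by
            rw [covM']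
            rintro ⟨h | h, -⟩
            · exact hMu ((covM₁ u).1 h).1
            · exact hx₂u h.symm
          have hM'x₁ : ¬ fcov M' x₁ := by
            rw [covM']
            rintro ⟨h | h, -⟩
            · exact ((covM₁ x₁).1 h).2 (Or.inl rfl)
            · exact hx₂x₁ h.symm
          have hN'x₁ : ¬ fcov N' x₁ := by
            rw [covN']
            rintro (h | h)
            · exact ((covN₁ x₁).1 h.1).2 (Or.inr rfl)
            · exact hyx₁ h.symm
          have hN'x₂ : ¬ fcov N' x₂ := by
            rw [covN']
            rintro (⟨-, h⟩ | h)
            · exact h rfl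
            · exact hyx₂ h.symm
          have he₁M' : e₁ ∉ M' := fun h => hM'u ⟨e₁, h, hue₁⟩
          have hf₁N' : f₁ ∉ N' := fun h => hN'x₂ ⟨f₁, h, hx₂f₁⟩
          refine ⟨y, insert e₁ M', insert f₁ N', hyu, hyM, hyN,
            matching_insert hM' he₁E ?_, matching_insert hN' hf₁E ?_, ?_, ?_, ?_, ?_, ?_, f₁, ?_, hf₁N⟩
          · intro v hv
            rcases (mem_e₁ v).1 hv with rfl | rfl
            · exact hM'u
            · exact hM'x₁
          · intro v hv
            rcases (mem_f₁ v).1 hv with rfl | rfl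
            · exact hN'x₁
            · exact hN'x₂
          · rw [Finset.card_insert_of_notMem he₁M', hcM', hcM₁]; omega
          · rw [Finset.card_insert_of_notMem hf₁N', hcN', hcN₁]; omega
          · intro v
            rw [fcov_insert, covM', covM₁, mem_e₁ v]
            exact p_b1 _ _ _ _ _ (t1 v) (t2 v) (fun h h' => hyu (h'.symm.trans h))
              (fun h h' => hyx₁ (h'.symm.trans h)) (fun h h' => hyx₂ (h'.symm.trans h))
          · intro v
            rw [fcov_insert, covN', covN₁, mem_f₁ v]
            exact p_b2 _ _ _ _ _ (u1 v) (u2 v) (fun h h' => hx₁u (h.symm.trans h'))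
              (fun h h' => hx₂u (h.symm.trans h'))
          · intro e he
            rw [Finset.mem_inter] at he
            have hee₁ : e ≠ e₁ := fun h => he₁M (h ▸ he.1)
            have hef₁ : e ≠ f₁ := fun h => hf₁N (h ▸ he.2)
            have : e ∈ M.erase f₁ ∩ N.erase e₁ := by
              rw [Finset.mem_inter, Finset.mem_erase, Finset.mem_erase]
              exact ⟨⟨hef₁, he.1⟩, hee₁, he.2⟩
            have := hsub this
            rw [Finset.mem_inter] at this ⊢
            exact ⟨he.1, Finset.mem_insert_of_mem this.2⟩
          · rw [Finset.mem_inter]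
            exact ⟨hf₁M, Finset.mem_insert_self _ _⟩
      · -- base case (b): the path ends at x₂, which is N-exposed
        right
        have hNx₂ : ¬ fcov N x₂ := by
          intro h
          apply hx₂N₁
          rw [covN₁]
          exact ⟨h, fun hc => hc.elim (fun h' => hx₂u h') (fun h' => hx₂x₁ h')⟩
        have he₁M₁ : e₁ ∉ M.erase f₁ := fun h => he₁M (Finset.mem_of_mem_erase h)
        have hf₁N₁ : f₁ ∉ N.erase e₁ := fun h => hf₁N (Finset.mem_of_mem_erase h)
        have hM₁u : ¬ fcov (M.erase f₁) u := by
          rw [covM₁]; exact fun h => hMu h.1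
        have hM₁x₁ : ¬ fcov (M.erase f₁) x₁ := by
          rw [covM₁]; exact fun h => h.2 (Or.inl rfl)
        have hN₁x₁ : ¬ fcov (N.erase e₁) x₁ := by
          rw [covN₁]; exact fun h => h.2 (Or.inr rfl)
        refine ⟨x₂, insert e₁ (M.erase f₁), insert f₁ (N.erase e₁), hx₂u, hMx₂, hNx₂,
          matching_insert hM₁ he₁E ?_, matching_insert hN₁ hf₁E ?_, ?_, ?_, ?_, ?_, ?_, f₁, ?_, hf₁N⟩
        · intro v hv
          rcases (mem_e₁ v).1 hv with rfl | rfl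
          · exact hM₁u
          · exact hM₁x₁
        · intro v hv
          rcases (mem_f₁ v).1 hv with rfl | rfl
          · exact hN₁x₁
          · exact hx₂N₁
        · rw [Finset.card_insert_of_notMem he₁M₁, hcM₁]; omega
        · rw [Finset.card_insert_of_notMem hf₁N₁, hcN₁]; omega
        · intro v
          rw [fcov_insert, covM₁, mem_e₁ v]
          exact p_b3 _ _ _ _ (t1 v) (fun h h' => hx₂u (h'.symm.trans h))
            (fun h h' => hx₂x₁ (h'.symm.trans h))
        · intro v
          rw [fcov_insert, covN₁, mem_f₁ v]
          exact p_b4 _ _ _ _ (u1 v) (fun h h' => hx₁u (h.symm.trans h'))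
        · intro e he
          rw [Finset.mem_inter] at he
          have hee₁ : e ≠ e₁ := fun h => he₁M (h ▸ he.1)
          rw [Finset.mem_inter]
          exact ⟨he.1, Finset.mem_insert_of_mem (Finset.mem_erase.2 ⟨hee₁, he.2⟩)⟩
        · rw [Finset.mem_inter]
          exact ⟨hf₁M, Finset.mem_insert_self _ _⟩
    · -- case (a) base: x₁ is M-exposed, augment
      left
      have he₁M : e₁ ∉ M := he₁M
      refine ⟨insert e₁ M, x₁, matching_insert hM he₁E ?_, ?_, ?_, hNx₁⟩
      · intro v hv
        rcases (mem_e₁ v).1 hv with rfl | rfl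
        · exact hMu
        · exact hx₁M
      · rw [Finset.card_insert_of_notMem he₁M]
      · intro v
        rw [fcov_insert, mem_e₁ v]
lemma core (H : SimpleGraph V)
    (hin : ∀ v : V, ∃ N : Finset (Sym2 V), IsMatchingFinset H N ∧
      N.card = matchingNumber H ∧ ¬ fcov N v) :
    ∀ (n : ℕ) (M : Finset (Sym2 V)) (u w : V), IsMatchingFinset H M →
      M.card = matchingNumber H → ¬ fcov M u → ¬ fcov M w → u ≠ w →
      ∀ p : H.Walk u w, p.length ≤ n → False := by
  intro n
  induction n with
  | zero =>
    intro M u w _ _ _ _ huw p hp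
    exact huw (SimpleGraph.Walk.eq_of_length_eq_zero (Nat.le_zero.1 hp))
  | succ n ih =>
    intro M u w hM hMcard hMu hMw huw p hp
    cases p with
    | nil => exact huw rfl
    | @cons _ t _ h q =>
      rw [SimpleGraph.Walk.length_cons] at hp
      have hqle : q.length ≤ n := by omega
      by_cases htw : t = w
      · subst htw
        have hEdge : s(u, t) ∈ H.edgeSet := (SimpleGraph.mem_edgeSet H).2 h
        have hins := matching_insert hM hEdge (fun v hv => by
          rcases Sym2.mem_iff.1 hv with rfl | rfl
          exacts [hMu, hMw])
        have hnm : s(u, t) ∉ M := fun hm => hMu ⟨_, hm, Sym2.mem_mk_left u t⟩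
        have hle := matching_card_le hins
        rw [Finset.card_insert_of_notMem hnm, hMcard] at hle
        omega
      · have hqpos : 1 ≤ q.length := by
          rcases Nat.eq_zero_or_pos q.length with h0 | h0
          · exact absurd (SimpleGraph.Walk.eq_of_length_eq_zero h0) htw
          · exact h0
        have hut : u ≠ t := h.ne
        by_cases hMt : fcov M t
        · -- extremal counterpart matching N missing t
          have hSne : Set.Nonempty {j | ∃ N, IsMatchingFinset H N ∧
              N.card = matchingNumber H ∧ ¬ fcov N t ∧ (M ∩ N).card = j} := by
            obtain ⟨N, h1, h2, h3⟩ := hin t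
            exact ⟨(M ∩ N).card, N, h1, h2, h3, rfl⟩
          have hSbdd : BddAbove {j | ∃ N, IsMatchingFinset H N ∧
              N.card = matchingNumber H ∧ ¬ fcov N t ∧ (M ∩ N).card = j} := by
            refine ⟨Fintype.card (Sym2 V), ?_⟩
            rintro j ⟨N, -, -, -, hj⟩
            exact hj ▸ Finset.card_le_univ _
          obtain ⟨N, hN, hNcard, hNt, hNint⟩ := Nat.sSup_mem hSne hSbdd
          have hNu : fcov N u := by
            by_contra hNu
            have hlen : (SimpleGraph.Walk.cons h SimpleGraph.Walk.nil : H.Walk u t).length ≤ n := by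
              simp only [SimpleGraph.Walk.length_cons, SimpleGraph.Walk.length_nil]
              omega
            exact ih N u t hN hNcard hNu hNt hut _ hlen
          have hNw : fcov N w := by
            by_contra hNw
            exact ih N t w hN hNcard hNt hNw htw q hqle
          rcases engine H N.card N M u le_rfl hM hN hMu hNu with
            ⟨M'', z, hm'', hc'', -, -⟩ |
            ⟨y, M', N', hyu, hyM, hyN, hM', hN', hcM', hcN', covM', covN', hsub, g, hg, hgN⟩
          · have := matching_card_le hm''
            rw [hc'', hMcard] at this
            omega
          · by_cases hyt : y = t
            · subst hyt
              refine ih M' y w hM' (hcM'.trans hMcard) ?_ ?_ htw q hqle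
              · rw [covM']
                rintro ⟨-, hy⟩
                exact hy rfl
              · rw [covM']
                rintro ⟨h' | h', -⟩
                exacts [hMw h', huw h'.symm]
            · have hN't : ¬ fcov N' t := by
                rw [covN']
                rintro (⟨h', -⟩ | h')
                exacts [hNt h', hyt h'.symm]
              have hmem : (M ∩ N').card ∈ {j | ∃ N, IsMatchingFinset H N ∧
                  N.card = matchingNumber H ∧ ¬ fcov N t ∧ (M ∩ N).card = j} :=
                ⟨N', hN', hcN'.trans hNcard, hN't, rfl⟩
              have hle := le_csSup hSbdd hmem
              have hlt : (M ∩ N).card < (M ∩ N').card := by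
                refine Finset.card_lt_card ⟨hsub, fun hcon => ?_⟩
                exact hgN (Finset.mem_inter.1 (hcon hg)).2
              omega
        · exact ih M t w hM hMcard hMt hMw htw q hqle
lemma sym2_exists_mem (e : Sym2 V) : ∃ a : V, a ∈ e := by
  induction e using Sym2.inductionOn with
  | hf x y => exact ⟨x, Sym2.mem_mk_left x y⟩

/-- component of an edge -/
noncomputable def ec (H : SimpleGraph V) (e : Sym2 V) : H.ConnectedComponent :=
  H.connectedComponentMk (Classical.choose (sym2_exists_mem e))

lemma ec_eq {H : SimpleGraph V} {e : Sym2 V} (he : e ∈ H.edgeSet) {a : V} (ha : a ∈ e) :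
    ec H e = H.connectedComponentMk a := by
  obtain ⟨q, hqa, heq, hadj⟩ := edge_decomp he ha
  subst heq
  have hch : Classical.choose (sym2_exists_mem s(a, q)) ∈ s(a, q) :=
    Classical.choose_spec (sym2_exists_mem s(a, q))
  unfold ec
  rcases Sym2.mem_iff.1 hch with h | h
  · rw [h]
  · rw [h]
    exact SimpleGraph.ConnectedComponent.eq.2 hadj.symm.reachable

lemma ends_card {H : SimpleGraph V} {e : Sym2 V} (he : e ∈ H.edgeSet) :
    (Finset.univ.filter (fun v : V => v ∈ e)).card = 2 := by
  obtain ⟨a, ha⟩ := sym2_exists_mem e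
  obtain ⟨q, hqa, heq, hadj⟩ := edge_decomp he ha
  have : Finset.univ.filter (fun v : V => v ∈ e) = {a, q} := by
    ext v
    simp only [Finset.mem_filter, Finset.mem_univ, true_and, heq, Sym2.mem_iff,
      Finset.mem_insert, Finset.mem_singleton]
  rw [this]
  rw [Finset.card_insert_of_notMem (by
    simp only [Finset.mem_singleton]
    exact fun h => hqa h.symm), Finset.card_singleton]

lemma count_master (H : SimpleGraph V) (D : ℕ) (hdeg : ∀ v, H.degree v ≤ D)
    (M : Finset (Sym2 V)) (hM : IsMatchingFinset H M) (hMcard : M.card = matchingNumber H)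
    (hmiss : ∀ c : H.ConnectedComponent,
      (Finset.univ.filter (fun v => H.connectedComponentMk v = c ∧ ¬ fcov M v)).card ≤ 1) :
    ((D + 1) / 2) * H.edgeFinset.card ≤ matchingNumber H * (D * ((D + 1) / 2) + D / 2) := by
  classical
  set k := (D + 1) / 2 with hk
  by_cases hm0 : H.edgeFinset.card = 0
  · rw [hm0, Nat.mul_zero]
    exact Nat.zero_le _
  -- D ≥ 1
  have hD1 : 1 ≤ D := by
    obtain ⟨e, he⟩ := Finset.card_pos.1 (Nat.pos_of_ne_zero hm0)
    have heE : e ∈ H.edgeSet := SimpleGraph.mem_edgeFinset.1 he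
    obtain ⟨a, ha⟩ := sym2_exists_mem e
    obtain ⟨q, hqa, heq, hadj⟩ := edge_decomp heE ha
    have : q ∈ H.neighborFinset a := (SimpleGraph.mem_neighborFinset H a q).2 hadj
    have : 0 < H.degree a := by
      rw [← SimpleGraph.card_neighborFinset_eq_degree]
      exact Finset.card_pos.2 ⟨q, this⟩
    exact le_trans this (hdeg a)
  set Vc : H.ConnectedComponent → Finset V :=
    fun c => Finset.univ.filter (fun v => H.connectedComponentMk v = c) with hVc
  set Ec : H.ConnectedComponent → Finset (Sym2 V) :=
    fun c => H.edgeFinset.filter (fun e => ec H e = c) with hEc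
  set Mc : H.ConnectedComponent → Finset (Sym2 V) :=
    fun c => M.filter (fun e => ec H e = c) with hMc
  have hMsub : ∀ e ∈ M, e ∈ H.edgeSet := fun e he => hM.1 he
  -- fiberwise decomposition
  have S1 : H.edgeFinset.card = ∑ c : H.ConnectedComponent, (Ec c).card :=
    Finset.card_eq_sum_card_fiberwise (fun e _ => Finset.mem_univ _)
  have S2 : M.card = ∑ c : H.ConnectedComponent, (Mc c).card :=
    Finset.card_eq_sum_card_fiberwise (fun e _ => Finset.mem_univ _)
  -- endpoints of an edge of component c lie in Vc c and are two
  have vc_ends : ∀ (c : H.ConnectedComponent) (e : Sym2 V), e ∈ Ec c →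
      ((Vc c).filter (fun v => v ∈ e)).card = 2 := by
    intro c e he
    rw [hEc] at he
    obtain ⟨heF, hec⟩ := Finset.mem_filter.1 he
    have heE : e ∈ H.edgeSet := SimpleGraph.mem_edgeFinset.1 heF
    have : (Vc c).filter (fun v => v ∈ e) = Finset.univ.filter (fun v : V => v ∈ e) := by
      rw [hVc]
      simp only [Finset.filter_filter]
      apply Finset.filter_congr
      intro v _
      constructor
      · rintro ⟨-, hv⟩; exact hv
      · intro hv
        refine ⟨?_, hv⟩
        rw [← ec_eq heE hv, hec]
    rw [this]
    exact ends_card heE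
  -- double counting
  have hdouble : ∀ c : H.ConnectedComponent,
      2 * (Ec c).card = ∑ v ∈ Vc c, ((Ec c).filter (fun e => v ∈ e)).card := by
    intro c
    have exchange : ∑ v ∈ Vc c, ((Ec c).filter (fun e => v ∈ e)).card
        = ∑ e ∈ Ec c, ((Vc c).filter (fun v => v ∈ e)).card := by
      simp_rw [Finset.card_filter]
      exact Finset.sum_comm
    rw [exchange, Finset.sum_congr rfl (vc_ends c), Finset.sum_const, smul_eq_mul, mul_comm]
  -- degree bounds
  have hdegv : ∀ (c : H.ConnectedComponent) (v : V),
      ((Ec c).filter (fun e => v ∈ e)).card ≤ H.degree v := by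
    intro c v
    rw [← SimpleGraph.card_incidenceFinset_eq_degree]
    apply Finset.card_le_card
    intro e he
    obtain ⟨he1, he2⟩ := Finset.mem_filter.1 he
    rw [hEc] at he1
    obtain ⟨he3, -⟩ := Finset.mem_filter.1 he1
    rw [SimpleGraph.mem_incidenceFinset]
    exact ⟨SimpleGraph.mem_edgeFinset.1 he3, he2⟩
  have hdeg_local : ∀ (c : H.ConnectedComponent) (v : V), v ∈ Vc c →
      H.degree v ≤ (Vc c).card - 1 := by
    intro c v hv
    rw [hVc] at hv
    have hvc : H.connectedComponentMk v = c := (Finset.mem_filter.1 hv).2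
    rw [← SimpleGraph.card_neighborFinset_eq_degree]
    have hsub : H.neighborFinset v ⊆ (Vc c).erase v := by
      intro w hw
      have hadj : H.Adj v w := (SimpleGraph.mem_neighborFinset H v w).1 hw
      rw [Finset.mem_erase, hVc]
      refine ⟨hadj.ne', Finset.mem_filter.2 ⟨Finset.mem_univ _, ?_⟩⟩
      rw [← hvc]
      exact SimpleGraph.ConnectedComponent.eq.2 hadj.symm.reachable
    calc (H.neighborFinset v).card ≤ ((Vc c).erase v).card := Finset.card_le_card hsub
      _ = (Vc c).card - 1 := Finset.card_erase_of_mem (by rw [hVc]; exact Finset.mem_filter.2 ⟨Finset.mem_univ _, hvc⟩)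
  have F1 : ∀ c : H.ConnectedComponent, 2 * (Ec c).card ≤ (Vc c).card * D := by
    intro c
    rw [hdouble c]
    calc ∑ v ∈ Vc c, ((Ec c).filter (fun e => v ∈ e)).card
        ≤ ∑ _v ∈ Vc c, D := Finset.sum_le_sum (fun v _ => le_trans (hdegv c v) (hdeg v))
      _ = (Vc c).card * D := by rw [Finset.sum_const, smul_eq_mul]
  have F2 : ∀ c : H.ConnectedComponent, 2 * (Ec c).card ≤ (Vc c).card * ((Vc c).card - 1) := by
    intro c
    rw [hdouble c]
    calc ∑ v ∈ Vc c, ((Ec c).filter (fun e => v ∈ e)).card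
        ≤ ∑ _v ∈ Vc c, ((Vc c).card - 1) :=
          Finset.sum_le_sum (fun v hv => le_trans (hdegv c v) (hdeg_local c v hv))
      _ = (Vc c).card * ((Vc c).card - 1) := by rw [Finset.sum_const, smul_eq_mul]
  -- component order vs matched edges
  have F3 : ∀ c : H.ConnectedComponent, (Vc c).card ≤ 2 * (Mc c).card + 1 := by
    intro c
    have hsub : Vc c ⊆ (Mc c).biUnion (fun e => Finset.univ.filter (fun v => v ∈ e))
        ∪ Finset.univ.filter (fun v => H.connectedComponentMk v = c ∧ ¬ fcov M v) := by
      intro v hv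
      rw [hVc] at hv
      have hvc : H.connectedComponentMk v = c := (Finset.mem_filter.1 hv).2
      rw [Finset.mem_union]
      by_cases hcov : fcov M v
      · left
        obtain ⟨e, heM, hve⟩ := hcov
        rw [Finset.mem_biUnion]
        refine ⟨e, ?_, Finset.mem_filter.2 ⟨Finset.mem_univ _, hve⟩⟩
        rw [hMc]
        refine Finset.mem_filter.2 ⟨heM, ?_⟩
        rw [ec_eq (hMsub e heM) hve, hvc]
      · right
        exact Finset.mem_filter.2 ⟨Finset.mem_univ _, hvc, hcov⟩
    calc (Vc c).card ≤ _ := Finset.card_le_card hsub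
      _ ≤ ((Mc c).biUnion (fun e => Finset.univ.filter (fun v => v ∈ e))).card
          + (Finset.univ.filter (fun v => H.connectedComponentMk v = c ∧ ¬ fcov M v)).card :=
          Finset.card_union_le _ _
      _ ≤ (∑ e ∈ Mc c, (Finset.univ.filter (fun v : V => v ∈ e)).card) + 1 := by
          gcongr
          · exact Finset.card_biUnion_le
          · exact hmiss c
      _ ≤ (∑ _e ∈ Mc c, 2) + 1 := by
          gcongr with e he
          have : e ∈ M := by rw [hMc] at he; exact (Finset.mem_filter.1 he).1
          exact le_of_eq (ends_card (hMsub e this))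
      _ = 2 * (Mc c).card + 1 := by rw [Finset.sum_const, smul_eq_mul, mul_comm]
  -- per-component bound
  have S5 : ∀ c : H.ConnectedComponent, k * (Ec c).card ≤
      D * k * (Mc c).card + (D / 2) * (if k ≤ (Mc c).card then k else 0) := by
    intro c
    have f1 := F1 c
    have f2 := F2 c
    have f3 := F3 c
    set a := (Mc c).card with ha
    set m := (Ec c).card with hm
    set nn := (Vc c).card with hnn
    split_ifs with hka
    · -- big component
      have h1 : 2 * m ≤ 2 * (a * D) + D := by
        calc 2 * m ≤ nn * D := f1
          _ ≤ (2 * a + 1) * D := Nat.mul_le_mul_right D f3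
          _ = 2 * (a * D) + D := by ring
      have hmle : m ≤ a * D + D / 2 := by
        set X := a * D with hX
        omega
      calc k * m ≤ k * (a * D + D / 2) := mul_le_mul_right hmle k
        _ = D * k * a + D / 2 * k := by ring
    · -- small component
      have h2a : 2 * a + 1 ≤ D := by omega
      have h1 : 2 * m ≤ 2 * (a * (2 * a + 1)) := by
        calc 2 * m ≤ nn * (nn - 1) := f2
          _ ≤ (2 * a + 1) * (2 * a) := Nat.mul_le_mul f3 (by omega)
          _ = 2 * (a * (2 * a + 1)) := by ring
      have hmle : m ≤ a * D := by
        have : m ≤ a * (2 * a + 1) := by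
          set X := a * (2 * a + 1) with hX
          omega
        calc m ≤ a * (2 * a + 1) := this
          _ ≤ a * D := mul_le_mul_right h2a a
      calc k * m ≤ k * (a * D) := mul_le_mul_right hmle k
        _ = D * k * a + D / 2 * 0 := by ring
        _ ≤ D * k * a + D / 2 * 0 := le_refl _
  -- sum up
  have final : k * H.edgeFinset.card ≤
      D * k * M.card + (D / 2) * M.card := by
    rw [S1, S2, Finset.mul_sum, Finset.mul_sum, Finset.mul_sum, ← Finset.sum_add_distrib]
    apply Finset.sum_le_sum
    intro c _
    calc k * (Ec c).card ≤ D * k * (Mc c).card + (D / 2) * (if k ≤ (Mc c).card then k else 0) :=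
          S5 c
      _ ≤ D * k * (Mc c).card + (D / 2) * (Mc c).card := by
          gcongr
          split_ifs with h
          · exact h
          · exact Nat.zero_le _
  calc k * H.edgeFinset.card ≤ D * k * M.card + (D / 2) * M.card := final
    _ = M.card * (D * k + D / 2) := by ring
    _ = matchingNumber H * (D * k + D / 2) := by rw [hMcard]
lemma matchingNumber_eq_of_edgeSet {H H' : SimpleGraph V} (h : H.edgeSet = H'.edgeSet) :
    matchingNumber H = matchingNumber H' :=
  le_antisymm (matchingNumber_mono (le_of_eq h)) (matchingNumber_mono (le_of_eq h.symm))

lemma key (D : ℕ) : ∀ (n : ℕ) (H : SimpleGraph V), H.edgeFinset.card ≤ n →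
    (∀ v, H.degree v ≤ D) →
    ((D + 1) / 2) * H.edgeFinset.card ≤ matchingNumber H * (D * ((D + 1) / 2) + D / 2) := by
  intro n
  induction n with
  | zero =>
    intro H hm _
    rw [Nat.le_zero] at hm
    rw [hm, Nat.mul_zero]
    exact Nat.zero_le _
  | succ n ih =>
    intro H hm hdeg
    by_cases hE : ∃ x : V, matchingNumber (H.deleteEdges {e : Sym2 V | x ∈ e}) < matchingNumber H
    · -- an essential vertex exists: delete it
      obtain ⟨x, hx⟩ := hE
      set H' := H.deleteEdges {e : Sym2 V | x ∈ e} with hH'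
      have hedgeSet : H'.edgeSet = H.edgeSet \ {e : Sym2 V | x ∈ e} :=
        SimpleGraph.edgeSet_deleteEdges _
      have hedgeF : H'.edgeFinset = H.edgeFinset.filter (fun e => ¬ x ∈ e) := by
        ext e
        simp only [SimpleGraph.mem_edgeFinset, Finset.mem_filter, hedgeSet, Set.mem_diff,
          Set.mem_setOf_eq]
      have hincid : H.edgeFinset.filter (fun e => x ∈ e) = H.incidenceFinset x := by
        ext e
        simp only [Finset.mem_filter, SimpleGraph.mem_edgeFinset, SimpleGraph.mem_incidenceFinset,
          SimpleGraph.incidenceSet, Set.mem_setOf_eq, Set.mem_sep_iff]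
      have hsplit : H.edgeFinset.card = H.degree x + H'.edgeFinset.card := by
        rw [hedgeF, ← SimpleGraph.card_incidenceFinset_eq_degree, ← hincid]
        exact (Finset.card_filter_add_card_filter_not (fun e => x ∈ e)).symm
      have hdeg' : ∀ v, H'.degree v ≤ D := by
        intro v
        refine le_trans ?_ (hdeg v)
        rw [← SimpleGraph.card_neighborFinset_eq_degree, ← SimpleGraph.card_neighborFinset_eq_degree]
        apply Finset.card_le_card
        intro w hw
        rw [SimpleGraph.mem_neighborFinset] at hw ⊢
        exact (SimpleGraph.deleteEdges_adj.1 hw).1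
      have hdx : 0 < H.degree x := by
        by_contra h0
        push_neg at h0
        rw [Nat.le_zero] at h0
        have : H'.edgeSet = H.edgeSet := by
          rw [hedgeSet]
          ext e
          simp only [Set.mem_diff, Set.mem_setOf_eq, and_iff_left_iff_imp]
          intro he hxe
          obtain ⟨q, hqx, heq, hadj⟩ := edge_decomp he hxe
          have : q ∈ H.neighborFinset x := (SimpleGraph.mem_neighborFinset H x q).2 hadj
          have : 0 < H.degree x := by
            rw [← SimpleGraph.card_neighborFinset_eq_degree]
            exact Finset.card_pos.2 ⟨q, this⟩
          omega
        rw [matchingNumber_eq_of_edgeSet this.symm] at hx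
        omega
      have hm' : H'.edgeFinset.card ≤ n := by omega
      have hIH : ((D + 1) / 2) * H'.edgeFinset.card ≤ matchingNumber H' * (D * ((D + 1) / 2) + D / 2) := by
        convert ih H' (by convert hm') (fun v => by convert hdeg' v)
      -- matchingNumber H ≤ matchingNumber H' + 1
      have hnu : matchingNumber H ≤ matchingNumber H' + 1 := by
        obtain ⟨M, hM, hMc⟩ := exists_max_matching H
        have hM' : IsMatchingFinset H' (M.filter (fun e => ¬ x ∈ e)) := by
          constructor
          · intro e he
            have he' := Finset.mem_coe.1 he
            obtain ⟨heM, hxe⟩ := Finset.mem_filter.1 he'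
            rw [hedgeSet]
            exact ⟨hM.1 heM, hxe⟩
          · intro e he f hf hef v
            exact hM.2 e (Finset.mem_of_mem_filter _ he) f (Finset.mem_of_mem_filter _ hf) hef v
        have hcard1 : (M.filter (fun e => x ∈ e)).card ≤ 1 := by
          rw [Finset.card_le_one]
          intro e he f hf
          obtain ⟨heM, hxe⟩ := Finset.mem_filter.1 he
          obtain ⟨hfM, hxf⟩ := Finset.mem_filter.1 hf
          exact matching_unique hM heM hfM hxe hxf
        have hsum := Finset.card_filter_add_card_filter_not (s := M) (fun e => x ∈ e)
        have hle := matching_card_le hM'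
        omega
      -- final arithmetic
      set k := (D + 1) / 2 with hk
      set A := D * k + D / 2 with hA
      have hkD : k * D ≤ A := by
        rw [hA]
        calc k * D = D * k := mul_comm k D
          _ ≤ D * k + D / 2 := Nat.le_add_right _ _
      calc k * H.edgeFinset.card = k * H'.edgeFinset.card + k * H.degree x := by
            rw [hsplit]; ring
        _ ≤ matchingNumber H' * A + k * D := by
            gcongr
            exact hdeg x
        _ ≤ matchingNumber H' * A + A := by gcongr
        _ = (matchingNumber H' + 1) * A := by ring
        _ ≤ matchingNumber H * A := by
            by_cases hcase : matchingNumber H' + 1 ≤ matchingNumber H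
            · exact Nat.mul_le_mul_right A hcase
            · omega
    · -- every vertex is inessential
      push_neg at hE
      have hin : ∀ v : V, ∃ N : Finset (Sym2 V), IsMatchingFinset H N ∧
          N.card = matchingNumber H ∧ ¬ fcov N v := by
        intro v
        obtain ⟨N, hN, hNc⟩ := exists_max_matching (H.deleteEdges {e : Sym2 V | v ∈ e})
        have hedgeSet : (H.deleteEdges {e : Sym2 V | v ∈ e}).edgeSet
            = H.edgeSet \ {e : Sym2 V | v ∈ e} := SimpleGraph.edgeSet_deleteEdges _
        have hsub : (H.deleteEdges {e : Sym2 V | v ∈ e}).edgeSet ⊆ H.edgeSet := by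
          rw [hedgeSet]; exact Set.diff_subset
        have hNH : IsMatchingFinset H N := ⟨fun e he => hsub (hN.1 he), hN.2⟩
        refine ⟨N, hNH, ?_, ?_⟩
        · exact hNc.trans (le_antisymm (matchingNumber_mono hsub) (hE v))
        · rintro ⟨e, heN, hve⟩
          have := hN.1 heN
          rw [hedgeSet] at this
          exact this.2 hve
      obtain ⟨M, hM, hMc⟩ := exists_max_matching H
      have hmiss : ∀ c : H.ConnectedComponent,
          (Finset.univ.filter (fun v => H.connectedComponentMk v = c ∧ ¬ fcov M v)).card ≤ 1 := by
        intro c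
        rw [Finset.card_le_one]
        intro u hu w hw
        obtain ⟨-, huc, hMu⟩ := Finset.mem_filter.1 hu
        obtain ⟨-, hwc, hMw⟩ := Finset.mem_filter.1 hw
        by_contra huw
        have hreach : H.Reachable u w := SimpleGraph.ConnectedComponent.eq.1 (huc.trans hwc.symm)
        obtain ⟨p⟩ := hreach
        exact core H hin p.length M u w hM hMc hMu hMw huw p le_rfl
      exact count_master H D hdeg M hM hMc hmiss

end CH

theorem stmt_1 {V : Type*} [Fintype V] (G : SimpleGraph V)
    (hiso : ∀ v : V, 0 < G.degree v) :
    ((G.maxDegree + 1) / 2) * G.edgeFinset.card ≤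
      matchingNumber G * (G.maxDegree * ((G.maxDegree + 1) / 2) + G.maxDegree / 2) :=
  CH.key G.maxDegree G.edgeFinset.card G le_rfl (fun v => G.degree_le_maxDegree v)
end

section
/- Let Δ ≥ 2 and let G be a simple graph with no isolated vertices satisfying ν(G) = ⌈Δ/2⌉, Δ(G) = Δ, and |E(G)| = ⌊(2⌈Δ/2⌉+1)·Δ/2⌋. Then for every vertex x of G, ν(G \ x) = ν(G). -/
open scoped Classical

attribute [-instance] SimpleGraph.instDecidableRelAdjDeleteEdgesOfDecidablePredSym2MemSetOfDecidableEq

namespace Helper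

variable {V : Type*}



variable {V : Type*}

/-- covered vertex -/
def covered (M : Finset (Sym2 V)) (v : V) : Prop := ∃ e ∈ M, v ∈ e

noncomputable def covF [Fintype V] (M : Finset (Sym2 V)) : Finset V :=
  Finset.univ.filter (fun v => covered M v)

lemma sym2_exists_rep (e : Sym2 V) : ∃ a b, e = s(a, b) := by
  induction e using Sym2.ind with
  | _ a b => exact ⟨a, b, rfl⟩

lemma mn_bddAbove [Fintype V] (G : SimpleGraph V) :
    BddAbove {n | ∃ M : Finset (Sym2 V), IsMatchingFinset G M ∧ M.card = n} := by
  refine ⟨Fintype.card (Sym2 V), ?_⟩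
  rintro n ⟨M, _, rfl⟩
  exact Finset.card_le_univ M

lemma empty_matching (G : SimpleGraph V) : IsMatchingFinset G (∅ : Finset (Sym2 V)) := by
  constructor
  · simp
  · simp

lemma card_le_mn [Fintype V] {G : SimpleGraph V} {M : Finset (Sym2 V)}
    (h : IsMatchingFinset G M) : M.card ≤ matchingNumber G :=
  le_csSup (mn_bddAbove G) ⟨M, h, rfl⟩

lemma exists_max_matching [Fintype V] (G : SimpleGraph V) :
    ∃ M : Finset (Sym2 V), IsMatchingFinset G M ∧ M.card = matchingNumber G := by
  have hne : {n | ∃ M : Finset (Sym2 V), IsMatchingFinset G M ∧ M.card = n}.Nonempty :=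
    ⟨0, ∅, empty_matching G, rfl⟩
  exact Nat.sSup_mem hne (mn_bddAbove G)

lemma matching_mono {G G' : SimpleGraph V} (h : G.edgeSet ⊆ G'.edgeSet)
    {M : Finset (Sym2 V)} (hM : IsMatchingFinset G M) : IsMatchingFinset G' M :=
  ⟨fun e he => h (hM.1 he), hM.2⟩

lemma mn_mono [Fintype V] {G G' : SimpleGraph V} (h : G.edgeSet ⊆ G'.edgeSet) :
    matchingNumber G ≤ matchingNumber G' := by
  obtain ⟨M, hM, hc⟩ := exists_max_matching G
  rw [← hc]
  exact card_le_mn (matching_mono h hM)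

lemma unique_edge {G : SimpleGraph V} {M : Finset (Sym2 V)} (hM : IsMatchingFinset G M)
    {e f : Sym2 V} {v : V} (he : e ∈ M) (hf : f ∈ M) (hv : v ∈ e) (hv' : v ∈ f) : e = f := by
  by_contra hne
  exact hM.2 e he f hf hne v ⟨hv, hv'⟩

lemma card_covF_le [Fintype V] (M : Finset (Sym2 V)) : (covF M).card ≤ 2 * M.card := by
  classical
  induction M using Finset.induction_on with
  | empty =>
    have : covF (∅ : Finset (Sym2 V)) = ∅ := by
      ext v; simp [covF, covered]
    simp [this]
  | @insert e M henm ih =>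
    obtain ⟨a, b, rfl⟩ := sym2_exists_rep e
    have hsub : covF (insert s(a, b) M) ⊆ insert a (insert b (covF M)) := by
      intro v hv
      simp only [covF, Finset.mem_filter, Finset.mem_univ, true_and] at hv
      obtain ⟨f, hf, hvf⟩ := hv
      rcases Finset.mem_insert.1 hf with rfl | hf
      · rcases Sym2.mem_iff.1 hvf with rfl | rfl
        · simp
        · simp
      · simp only [Finset.mem_insert]
        right; right
        simp only [covF, Finset.mem_filter, Finset.mem_univ, true_and]
        exact ⟨f, hf, hvf⟩
    calc (covF (insert s(a, b) M)).card ≤ (insert a (insert b (covF M))).card :=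
            Finset.card_le_card hsub
      _ ≤ (insert b (covF M)).card + 1 := Finset.card_insert_le _ _
      _ ≤ (covF M).card + 1 + 1 := by
            have := Finset.card_insert_le b (covF M); omega
      _ ≤ 2 * M.card + 1 + 1 := by omega
      _ = 2 * (insert s(a, b) M).card := by
            rw [Finset.card_insert_of_notMem henm]; ring

/-- augmenting an edge between two uncovered vertices -/
lemma matching_insert {G : SimpleGraph V} {M : Finset (Sym2 V)} (hM : IsMatchingFinset G M)
    {a b : V} (hadj : G.Adj a b) (ha : ¬ covered M a) (hb : ¬ covered M b) :
    IsMatchingFinset G (insert s(a, b) M) ∧ (insert s(a, b) M).card = M.card + 1 := by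
  have hnm : s(a, b) ∉ M := fun h => ha ⟨_, h, by simp⟩
  refine ⟨⟨?_, ?_⟩, ?_⟩
  · intro e he
    rcases Finset.mem_insert.1 (Finset.mem_coe.1 he) with rfl | he
    · exact hadj
    · exact hM.1 he
  · intro e he f hf hne v hv
    rcases Finset.mem_insert.1 he with rfl | heM
    · rcases Finset.mem_insert.1 hf with rfl | hfM
      · exact hne rfl
      · rcases Sym2.mem_iff.1 hv.1 with rfl | rfl
        · exact ha ⟨f, hfM, hv.2⟩
        · exact hb ⟨f, hfM, hv.2⟩
    · rcases Finset.mem_insert.1 hf with rfl | hfM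
      · rcases Sym2.mem_iff.1 hv.2 with rfl | rfl
        · exact ha ⟨e, heM, hv.1⟩
        · exact hb ⟨e, heM, hv.1⟩
      · exact hM.2 e heM f hfM hne v hv
  · rw [Finset.card_insert_of_notMem hnm]

lemma degree_mono [Fintype V] {G G' : SimpleGraph V} (h : G ≤ G') (v : V) :
    G.degree v ≤ G'.degree v := by
  apply Finset.card_le_card
  intro u hu
  rw [SimpleGraph.mem_neighborFinset] at hu ⊢
  exact h hu

/-- Flip lemma: if `M, N` are maximum matchings and `t` is `N`-exposed, then there is a
maximum matching `M'` exposing `t` whose covered set is contained in that of `M` plus one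
extra vertex `y`. -/
lemma flip [Fintype V] (m : ℕ) : ∀ (H : SimpleGraph V) (s : ℕ) (M N : Finset (Sym2 V)) (t : V),
    H.edgeFinset.card ≤ m →
    IsMatchingFinset H M → IsMatchingFinset H N → M.card = s → N.card = s →
    (∀ K, IsMatchingFinset H K → K.card ≤ s) → ¬ covered N t →
    ∃ M' y, IsMatchingFinset H M' ∧ M'.card = s ∧ ¬ covered M' t ∧
      ∀ v, covered M' v → covered M v ∨ v = y := by
  induction m with
  | zero =>
    intro H s M N t hfuel hM hN hMs hNs hmax ht
    refine ⟨M, t, hM, hMs, ?_, fun v hv => Or.inl hv⟩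
    rintro ⟨e, heM, hte⟩
    have : e ∈ H.edgeFinset := SimpleGraph.mem_edgeFinset.2 (hM.1 (Finset.mem_coe.2 heM))
    have : H.edgeFinset.card ≠ 0 := Finset.card_ne_zero_of_mem this
    omega
  | succ m ih =>
    intro H s M N t hfuel hM hN hMs hNs hmax ht
    by_cases hct : covered M t
    case neg => exact ⟨M, t, hM, hMs, hct, fun v hv => Or.inl hv⟩
    obtain ⟨e, heM, hte⟩ := hct
    obtain ⟨t₁, rfl⟩ := Sym2.mem_iff_exists.1 hte
    have hadj : H.Adj t t₁ := (SimpleGraph.mem_edgeSet _).1 (hM.1 (Finset.mem_coe.2 heM))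
    have htne : t ≠ t₁ := hadj.ne
    -- t₁ must be covered by N
    have ht₁N : covered N t₁ := by
      by_contra hc
      obtain ⟨hmat, hcard⟩ := matching_insert hN hadj ht hc
      have := hmax _ hmat
      omega
    obtain ⟨f, hfN, ht₁f⟩ := ht₁N
    obtain ⟨t₂, rfl⟩ := Sym2.mem_iff_exists.1 ht₁f
    have hadj₂ : H.Adj t₁ t₂ := (SimpleGraph.mem_edgeSet _).1 (hN.1 (Finset.mem_coe.2 hfN))
    have ht₂t : t₂ ≠ t := by
      rintro rfl
      exact ht ⟨s(t₁, t₂), hfN, by simp⟩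
    have ht₂t₁ : t₂ ≠ t₁ := fun h => hadj₂.ne h.symm
    have hs1 : 1 ≤ s := by
      rw [← hMs]; exact Finset.card_pos.2 ⟨_, heM⟩
    by_cases hc2 : covered M t₂
    · -- recursive case: delete the vertices t, t₁ (as incidences) and recurse
      set H' : SimpleGraph V := H.deleteEdges {e' | t ∈ e' ∨ t₁ ∈ e'} with hH'
      have hH'edge : ∀ g, g ∈ H'.edgeSet ↔ g ∈ H.edgeSet ∧ t ∉ g ∧ t₁ ∉ g := by
        intro g
        rw [hH', SimpleGraph.edgeSet_deleteEdges]
        simp only [Set.mem_diff, Set.mem_setOf_eq]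
        tauto
      have hM₁ : IsMatchingFinset H' (M.erase s(t, t₁)) := by
        constructor
        · intro g hg
          have hgM : g ∈ M := Finset.mem_of_mem_erase (Finset.mem_coe.1 hg)
          have hgne : g ≠ s(t, t₁) := Finset.ne_of_mem_erase (Finset.mem_coe.1 hg)
          refine (hH'edge g).2 ⟨hM.1 (Finset.mem_coe.2 hgM), ?_, ?_⟩
          · intro htg
            exact hgne (unique_edge hM hgM heM htg (by simp))
          · intro ht₁g
            exact hgne (unique_edge hM hgM heM ht₁g (by simp))
        · intro a ha b hb hne v hv
          exact hM.2 a (Finset.mem_of_mem_erase ha) b (Finset.mem_of_mem_erase hb) hne v hv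
      have hN₁ : IsMatchingFinset H' (N.erase s(t₁, t₂)) := by
        constructor
        · intro g hg
          have hgN : g ∈ N := Finset.mem_of_mem_erase (Finset.mem_coe.1 hg)
          have hgne : g ≠ s(t₁, t₂) := Finset.ne_of_mem_erase (Finset.mem_coe.1 hg)
          refine (hH'edge g).2 ⟨hN.1 (Finset.mem_coe.2 hgN), ?_, ?_⟩
          · intro htg
            exact ht ⟨g, hgN, htg⟩
          · intro ht₁g
            exact hgne (unique_edge hN hgN hfN ht₁g (by simp))
        · intro a ha b hb hne v hv
          exact hN.2 a (Finset.mem_of_mem_erase ha) b (Finset.mem_of_mem_erase hb) hne v hv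
      have hM₁c : (M.erase s(t, t₁)).card = s - 1 := by
        rw [Finset.card_erase_of_mem heM, hMs]
      have hN₁c : (N.erase s(t₁, t₂)).card = s - 1 := by
        rw [Finset.card_erase_of_mem hfN, hNs]
      have hmax' : ∀ K, IsMatchingFinset H' K → K.card ≤ s - 1 := by
        intro K hK
        have hKt : ∀ g ∈ K, t ∉ g ∧ t₁ ∉ g := by
          intro g hg
          exact ((hH'edge g).1 (hK.1 (Finset.mem_coe.2 hg))).2
        have hKmat : IsMatchingFinset H K :=
          ⟨fun g hg => ((hH'edge g).1 (hK.1 hg)).1, hK.2⟩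
        have htK : ¬ covered K t := by
          rintro ⟨g, hg, htg⟩; exact (hKt g hg).1 htg
        have ht₁K : ¬ covered K t₁ := by
          rintro ⟨g, hg, htg⟩; exact (hKt g hg).2 htg
        obtain ⟨hmat, hcard⟩ := matching_insert hKmat hadj htK ht₁K
        have := hmax _ hmat
        omega
      have hcov₂ : ¬ covered (N.erase s(t₁, t₂)) t₂ := by
        rintro ⟨g, hg, ht₂g⟩
        exact Finset.ne_of_mem_erase hg
          (unique_edge hN (Finset.mem_of_mem_erase hg) hfN ht₂g (by simp))
      have hfuel' : H'.edgeFinset.card ≤ m := by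
        have hsub : H'.edgeFinset ⊆ H.edgeFinset := by
          intro g hg
          rw [SimpleGraph.mem_edgeFinset] at hg ⊢
          exact ((hH'edge g).1 hg).1
        have hmem : s(t, t₁) ∈ H.edgeFinset := SimpleGraph.mem_edgeFinset.2 hadj
        have hnmem : s(t, t₁) ∉ H'.edgeFinset := by
          rw [SimpleGraph.mem_edgeFinset]
          intro hg
          exact ((hH'edge _).1 hg).2.1 (by simp)
        have : H'.edgeFinset.card < H.edgeFinset.card :=
          Finset.card_lt_card ⟨hsub, fun hss => hnmem (hss hmem)⟩
        omega
      obtain ⟨M'', y, hM''m, hM''c, hM''t₂, hM''cov⟩ :=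
        ih H' (s - 1) (M.erase s(t, t₁)) (N.erase s(t₁, t₂)) t₂ hfuel' hM₁ hN₁ hM₁c hN₁c
          hmax' hcov₂
      have hM''edges : ∀ g ∈ M'', t ∉ g ∧ t₁ ∉ g := by
        intro g hg
        exact ((hH'edge g).1 (hM''m.1 (Finset.mem_coe.2 hg))).2
      have hfnotM'' : s(t₁, t₂) ∉ M'' := by
        intro h
        exact hM''t₂ ⟨_, h, by simp⟩
      refine ⟨insert s(t₁, t₂) M'', y, ⟨?_, ?_⟩, ?_, ?_, ?_⟩
      · intro g hg
        rcases Finset.mem_insert.1 (Finset.mem_coe.1 hg) with rfl | hgm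
        · exact hadj₂
        · exact ((hH'edge g).1 (hM''m.1 (Finset.mem_coe.2 hgm))).1
      · intro a ha b hb hne v hv
        rcases Finset.mem_insert.1 ha with rfl | haM
        · rcases Finset.mem_insert.1 hb with rfl | hbM
          · exact hne rfl
          · rcases Sym2.mem_iff.1 hv.1 with rfl | rfl
            · exact (hM''edges b hbM).2 hv.2
            · exact hM''t₂ ⟨b, hbM, hv.2⟩
        · rcases Finset.mem_insert.1 hb with rfl | hbM
          · rcases Sym2.mem_iff.1 hv.2 with rfl | rfl
            · exact (hM''edges a haM).2 hv.1
            · exact hM''t₂ ⟨a, haM, hv.1⟩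
          · exact hM''m.2 a haM b hbM hne v hv
      · rw [Finset.card_insert_of_notMem hfnotM'', hM''c]
        omega
      · rintro ⟨g, hg, htg⟩
        rcases Finset.mem_insert.1 hg with rfl | hgm
        · rcases Sym2.mem_iff.1 htg with h | h
          · exact htne h
          · exact ht₂t h.symm
        · exact (hM''edges g hgm).1 htg
      · rintro w ⟨g, hg, hvg⟩
        rcases Finset.mem_insert.1 hg with rfl | hgm
        · rcases Sym2.mem_iff.1 hvg with h | h
          · exact Or.inl ⟨s(t, t₁), heM, by rw [h]; simp⟩
          · rw [h]; exact Or.inl hc2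
        · rcases hM''cov w ⟨g, hgm, hvg⟩ with h | h
          · exact Or.inl ⟨_, Finset.mem_of_mem_erase h.choose_spec.1, h.choose_spec.2⟩
          · exact Or.inr h
    · -- terminal case: swap e for f
      have hfnot : s(t₁, t₂) ∉ M.erase s(t, t₁) := by
        intro h
        exact hc2 ⟨_, Finset.mem_of_mem_erase h, by simp⟩
      refine ⟨insert s(t₁, t₂) (M.erase s(t, t₁)), t₂, ⟨?_, ?_⟩, ?_, ?_, ?_⟩
      · intro g hg
        rcases Finset.mem_insert.1 (Finset.mem_coe.1 hg) with rfl | hgm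
        · exact hadj₂
        · exact hM.1 (Finset.mem_coe.2 (Finset.mem_of_mem_erase hgm))
      · intro a ha b hb hne v hv
        rcases Finset.mem_insert.1 ha with rfl | haM
        · rcases Finset.mem_insert.1 hb with rfl | hbM
          · exact hne rfl
          · rcases Sym2.mem_iff.1 hv.1 with rfl | rfl
            · exact Finset.ne_of_mem_erase hbM
                (unique_edge hM (Finset.mem_of_mem_erase hbM) heM hv.2 (by simp))
            · exact hc2 ⟨b, Finset.mem_of_mem_erase hbM, hv.2⟩
        · rcases Finset.mem_insert.1 hb with rfl | hbM
          · rcases Sym2.mem_iff.1 hv.2 with rfl | rfl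
            · exact Finset.ne_of_mem_erase haM
                (unique_edge hM (Finset.mem_of_mem_erase haM) heM hv.1 (by simp))
            · exact hc2 ⟨a, Finset.mem_of_mem_erase haM, hv.1⟩
          · exact hM.2 a (Finset.mem_of_mem_erase haM) b (Finset.mem_of_mem_erase hbM) hne v hv
      · rw [Finset.card_insert_of_notMem hfnot, Finset.card_erase_of_mem heM, hMs]
        omega
      · rintro ⟨g, hg, htg⟩
        rcases Finset.mem_insert.1 hg with rfl | hgm
        · rcases Sym2.mem_iff.1 htg with h | h
          · exact htne h
          · exact ht₂t h.symm
        · exact Finset.ne_of_mem_erase hgm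
            (unique_edge hM (Finset.mem_of_mem_erase hgm) heM htg (by simp))
      · rintro w ⟨g, hg, hvg⟩
        rcases Finset.mem_insert.1 hg with rfl | hgm
        · rcases Sym2.mem_iff.1 hvg with h | h
          · exact Or.inl ⟨s(t, t₁), heM, by rw [h]; simp⟩
          · exact Or.inr h
        · exact Or.inl ⟨g, Finset.mem_of_mem_erase hgm, hvg⟩

def sideGraph (H : SimpleGraph V) (S : Set V) : SimpleGraph V where
  Adj a b := H.Adj a b ∧ a ∈ S ∧ b ∈ S
  symm := ⟨by rintro a b ⟨h, ha, hb⟩; exact ⟨h.symm, hb, ha⟩⟩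
  loopless := ⟨by rintro a ⟨h, _, _⟩; exact H.irrefl h⟩

lemma sideGraph_le (H : SimpleGraph V) (S : Set V) : sideGraph H S ≤ H :=
  fun _ _ h => h.1

lemma sideGraph_edge_le (H : SimpleGraph V) (S : Set V) :
    (sideGraph H S).edgeSet ⊆ H.edgeSet :=
  SimpleGraph.edgeSet_mono (sideGraph_le H S)

lemma sideGraph_vert_mem {H : SimpleGraph V} {S : Set V} {e : Sym2 V}
    (he : e ∈ (sideGraph H S).edgeSet) {v : V} (hv : v ∈ e) : v ∈ S := by
  induction e using Sym2.ind with
  | _ a b =>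
    rw [SimpleGraph.mem_edgeSet] at he
    rcases Sym2.mem_iff.1 hv with rfl | rfl
    · exact he.2.1
    · exact he.2.2

lemma delv_edge (H : SimpleGraph V) (v : V) (g : Sym2 V) :
    g ∈ (H.deleteEdges {e | v ∈ e}).edgeSet ↔ g ∈ H.edgeSet ∧ v ∉ g := by
  rw [SimpleGraph.edgeSet_deleteEdges]
  simp [Set.mem_diff]

lemma core [Fintype V] (D : ℕ) : ∀ (m : ℕ) (H : SimpleGraph V),
    H.edgeFinset.card ≤ m → 2 * matchingNumber H < D → (∀ v, H.degree v ≤ D) →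
    H.edgeFinset.card ≤ matchingNumber H * D := by
  intro m
  induction m with
  | zero =>
    intro H hc _ _
    have : H.edgeFinset.card = 0 := Nat.le_zero.1 hc
    rw [this]
    exact Nat.zero_le _
  | succ m ih =>
    intro H hfuel hD hdeg
    set s := matchingNumber H with hs
    by_cases hA : ∃ v, matchingNumber (H.deleteEdges {e | v ∈ e}) < s
    · -- essential vertex case
      obtain ⟨v, hv⟩ := hA
      set H' := H.deleteEdges {e | v ∈ e} with hH'
      have hEF : H'.edgeFinset = H.edgeFinset \ H.incidenceFinset v := by
        ext g
        simp only [SimpleGraph.mem_edgeFinset, Finset.mem_sdiff,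
          SimpleGraph.mem_incidenceFinset, SimpleGraph.incidenceSet, Set.mem_setOf_eq,
          hH', delv_edge]
        tauto
      have hsub : H.incidenceFinset v ⊆ H.edgeFinset := by
        intro g hg
        simp only [SimpleGraph.mem_incidenceFinset, SimpleGraph.incidenceSet,
          Set.mem_setOf_eq] at hg
        exact SimpleGraph.mem_edgeFinset.2 hg.1
      have hcard' : H'.edgeFinset.card = H.edgeFinset.card - H.degree v := by
        rw [hEF, Finset.card_sdiff_of_subset hsub, SimpleGraph.card_incidenceFinset_eq_degree]
      have hdegv : 1 ≤ H.degree v := by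
        by_contra h
        have hzero : ∀ g ∈ H.edgeSet, v ∉ g := by
          intro g hg hvg
          have hm : g ∈ H.incidenceFinset v := by
            simp only [SimpleGraph.mem_incidenceFinset, SimpleGraph.incidenceSet,
              Set.mem_setOf_eq]
            exact ⟨hg, hvg⟩
          have h1 : 1 ≤ (H.incidenceFinset v).card := Finset.card_pos.2 ⟨g, hm⟩
          rw [SimpleGraph.card_incidenceFinset_eq_degree] at h1
          omega
        have hmono : matchingNumber H ≤ matchingNumber H' := by
          apply mn_mono
          intro g hg
          rw [hH', delv_edge]
          exact ⟨hg, hzero g hg⟩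
        rw [← hs] at hmono
        omega
      have hdle : H.degree v ≤ H.edgeFinset.card := by
        rw [← SimpleGraph.card_incidenceFinset_eq_degree]
        exact Finset.card_le_card hsub
      have hfuel' : H'.edgeFinset.card ≤ m := by omega
      have hD' : 2 * matchingNumber H' < D := by omega
      have hdeg' : ∀ u, H'.degree u ≤ D := fun u =>
        le_trans (degree_mono (SimpleGraph.deleteEdges_le _) u) (hdeg u)
      have hIH := ih H' hfuel' hD' hdeg'
      have h1 : matchingNumber H' ≤ s - 1 := by omega
      have hs1 : 1 ≤ s := by omega
      have : H.edgeFinset.card = H'.edgeFinset.card + H.degree v := by omega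
      rw [this]
      calc H'.edgeFinset.card + H.degree v ≤ (s - 1) * D + D :=
            add_le_add (le_trans hIH (Nat.mul_le_mul h1 le_rfl)) (hdeg v)
        _ = ((s - 1) + 1) * D := by ring
        _ ≤ s * D := Nat.mul_le_mul (by omega) le_rfl
    · -- every vertex is avoidable
      push_neg at hA
      have allav : ∀ v, ∃ M, IsMatchingFinset H M ∧ M.card = s ∧ ¬ covered M v := by
        intro v
        obtain ⟨M, hM, hMc⟩ := exists_max_matching (H.deleteEdges {e | v ∈ e})
        have hMH : IsMatchingFinset H M :=
          matching_mono (fun g hg => ((delv_edge H v g).1 hg).1) hM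
        have hle : s ≤ M.card := by rw [hMc]; exact hA v
        have hge : M.card ≤ s := by rw [hs]; exact card_le_mn hMH
        refine ⟨M, hMH, le_antisymm hge hle, ?_⟩
        rintro ⟨g, hg, hvg⟩
        exact ((delv_edge H v g).1 (hM.1 (Finset.mem_coe.2 hg))).2 hvg
      have degle : ∀ v, H.degree v ≤ 2 * s := by
        intro v
        obtain ⟨M, hM, hMc, hMv⟩ := allav v
        have hsub : H.neighborFinset v ⊆ covF M := by
          intro u hu
          rw [SimpleGraph.mem_neighborFinset] at hu
          simp only [covF, Finset.mem_filter, Finset.mem_univ, true_and]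
          by_contra hc
          obtain ⟨hmat, hcard⟩ := matching_insert hM hu hMv hc
          have h2 := card_le_mn hmat
          rw [← hs] at h2
          omega
        calc H.degree v ≤ (covF M).card := Finset.card_le_card hsub
          _ ≤ 2 * M.card := card_covF_le M
          _ = 2 * s := by rw [hMc]
      by_cases hB1 : ∃ u w, 0 < H.degree u ∧ 0 < H.degree w ∧ ¬ H.Reachable u w
      · -- disconnected support: split
        obtain ⟨u, w, hu, hw, hnr⟩ := hB1
        set S : Set V := {z | H.Reachable u z} with hS
        have hclosed : ∀ a b, H.Adj a b → (a ∈ S ↔ b ∈ S) := by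
          intro a b hab
          constructor
          · intro h; exact h.trans hab.reachable
          · intro h; exact h.trans hab.symm.reachable
        set H₁ := sideGraph H S with hH₁
        set H₂ := sideGraph H Sᶜ with hH₂
        have hsplit : ∀ g ∈ H.edgeSet, g ∈ H₁.edgeSet ∨ g ∈ H₂.edgeSet := by
          intro g hg
          induction g using Sym2.ind with
          | _ a b =>
            rw [SimpleGraph.mem_edgeSet] at hg
            by_cases ha : a ∈ S
            · exact Or.inl ((SimpleGraph.mem_edgeSet _).2 ⟨hg, ha, (hclosed a b hg).1 ha⟩)
            · refine Or.inr ((SimpleGraph.mem_edgeSet _).2 ⟨hg, ha, ?_⟩)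
              intro hb
              exact ha ((hclosed a b hg).2 hb)
        have hvert : ∀ g : Sym2 V, ∃ a, a ∈ g := by
          intro g
          obtain ⟨a, b, rfl⟩ := sym2_exists_rep g
          exact ⟨a, by simp⟩
        have hdisjE : Disjoint H₁.edgeFinset H₂.edgeFinset := by
          rw [Finset.disjoint_left]
          intro g hg₁ hg₂
          obtain ⟨a, ha⟩ := hvert g
          have h1 : a ∈ S := sideGraph_vert_mem (SimpleGraph.mem_edgeFinset.1 hg₁) ha
          have h2 : a ∈ Sᶜ := sideGraph_vert_mem (SimpleGraph.mem_edgeFinset.1 hg₂) ha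
          exact h2 h1
        have hEF : H.edgeFinset = H₁.edgeFinset ∪ H₂.edgeFinset := by
          ext g
          simp only [SimpleGraph.mem_edgeFinset, Finset.mem_union]
          constructor
          · intro hg; exact hsplit g hg
          · rintro (hg | hg)
            · exact sideGraph_edge_le H S hg
            · exact sideGraph_edge_le H Sᶜ hg
        have hcards : H.edgeFinset.card = H₁.edgeFinset.card + H₂.edgeFinset.card := by
          rw [hEF, Finset.card_union_of_disjoint hdisjE]
        obtain ⟨u', hu'⟩ := (H.degree_pos_iff_exists_adj u).1 hu
        obtain ⟨w', hw'⟩ := (H.degree_pos_iff_exists_adj w).1 hw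
        have huS : u ∈ S := SimpleGraph.Reachable.refl u
        have hwS : w ∉ S := hnr
        have heu : s(u, u') ∈ H₁.edgeFinset := by
          rw [SimpleGraph.mem_edgeFinset, SimpleGraph.mem_edgeSet]
          exact ⟨hu', huS, (hclosed u u' hu').1 huS⟩
        have hew : s(w, w') ∈ H₂.edgeFinset := by
          rw [SimpleGraph.mem_edgeFinset, SimpleGraph.mem_edgeSet]
          refine ⟨hw', hwS, ?_⟩
          intro hw'S
          exact hwS ((hclosed w w' hw').2 hw'S)
        have heunot : s(u, u') ∉ H₂.edgeFinset := by
          intro h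
          exact (sideGraph_vert_mem (SimpleGraph.mem_edgeFinset.1 h) (by simp : u ∈ s(u, u'))) huS
        have hewnot : s(w, w') ∉ H₁.edgeFinset := by
          intro h
          exact hwS (sideGraph_vert_mem (SimpleGraph.mem_edgeFinset.1 h) (by simp : w ∈ s(w, w')))
        have hsub₁ : H₁.edgeFinset ⊆ H.edgeFinset := by
          intro g hg
          rw [SimpleGraph.mem_edgeFinset] at hg ⊢
          exact sideGraph_edge_le H S hg
        have hsub₂ : H₂.edgeFinset ⊆ H.edgeFinset := by
          intro g hg
          rw [SimpleGraph.mem_edgeFinset] at hg ⊢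
          exact sideGraph_edge_le H Sᶜ hg
        have hfuel₁ : H₁.edgeFinset.card ≤ m := by
          have : H₁.edgeFinset.card < H.edgeFinset.card :=
            Finset.card_lt_card ⟨hsub₁, fun hss => hewnot (hss (hEF ▸ Finset.mem_union_right _ hew))⟩
          omega
        have hfuel₂ : H₂.edgeFinset.card ≤ m := by
          have : H₂.edgeFinset.card < H.edgeFinset.card :=
            Finset.card_lt_card ⟨hsub₂, fun hss => heunot (hss (hEF ▸ Finset.mem_union_left _ heu))⟩
          omega
        have hedgeSetsub₁ : H₁.edgeSet ⊆ H.edgeSet := fun g hg => sideGraph_edge_le H S hg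
        have hedgeSetsub₂ : H₂.edgeSet ⊆ H.edgeSet := fun g hg => sideGraph_edge_le H Sᶜ hg
        have hmn₁ : matchingNumber H₁ ≤ s := by rw [hs]; exact mn_mono hedgeSetsub₁
        have hmn₂ : matchingNumber H₂ ≤ s := by rw [hs]; exact mn_mono hedgeSetsub₂
        have hIH₁ := ih H₁ hfuel₁ (by omega) (fun x => le_trans (degree_mono (sideGraph_le H S) x) (hdeg x))
        have hIH₂ := ih H₂ hfuel₂ (by omega) (fun x => le_trans (degree_mono (sideGraph_le H Sᶜ) x) (hdeg x))
        obtain ⟨M₁, hM₁, hM₁c⟩ := exists_max_matching H₁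
        obtain ⟨M₂, hM₂, hM₂c⟩ := exists_max_matching H₂
        have hdisjM : Disjoint M₁ M₂ := by
          rw [Finset.disjoint_left]
          intro g hg₁ hg₂
          obtain ⟨a, ha⟩ := hvert g
          exact (sideGraph_vert_mem (hM₂.1 (Finset.mem_coe.2 hg₂)) ha)
            (sideGraph_vert_mem (hM₁.1 (Finset.mem_coe.2 hg₁)) ha)
        have hmatU : IsMatchingFinset H (M₁ ∪ M₂) := by
          constructor
          · intro g hg
            rcases Finset.mem_union.1 (Finset.mem_coe.1 hg) with h | h
            · exact hedgeSetsub₁ (hM₁.1 (Finset.mem_coe.2 h))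
            · exact hedgeSetsub₂ (hM₂.1 (Finset.mem_coe.2 h))
          · intro a ha b hb hne x hx
            rcases Finset.mem_union.1 ha with ha' | ha' <;> rcases Finset.mem_union.1 hb with hb' | hb'
            · exact hM₁.2 a ha' b hb' hne x hx
            · exact (sideGraph_vert_mem (hM₂.1 (Finset.mem_coe.2 hb')) hx.2)
                (sideGraph_vert_mem (hM₁.1 (Finset.mem_coe.2 ha')) hx.1)
            · exact (sideGraph_vert_mem (hM₂.1 (Finset.mem_coe.2 ha')) hx.1)
                (sideGraph_vert_mem (hM₁.1 (Finset.mem_coe.2 hb')) hx.2)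
            · exact hM₂.2 a ha' b hb' hne x hx
        have hsumM : matchingNumber H₁ + matchingNumber H₂ ≤ s := by
          have hcardU : (M₁ ∪ M₂).card = M₁.card + M₂.card := Finset.card_union_of_disjoint hdisjM
          have := card_le_mn hmatU
          rw [← hs] at this
          omega
        calc H.edgeFinset.card = H₁.edgeFinset.card + H₂.edgeFinset.card := hcards
          _ ≤ matchingNumber H₁ * D + matchingNumber H₂ * D := add_le_add hIH₁ hIH₂
          _ = (matchingNumber H₁ + matchingNumber H₂) * D := by ring
          _ ≤ s * D := Nat.mul_le_mul hsumM le_rfl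
      · -- connected support: Gallai-type argument
        push_neg at hB1
        obtain ⟨M, hM, hMc⟩ := exists_max_matching H
        rw [← hs] at hMc
        set P := Finset.univ.filter (fun v => ¬ covered M v ∧ 0 < H.degree v) with hPdef
        have hmaxH : ∀ K, IsMatchingFinset H K → K.card ≤ s := by
          intro K hK
          rw [hs]
          exact card_le_mn hK
        have hP1 : P.card ≤ 1 := by
          rw [Finset.card_le_one]
          intro p₁ hp₁ p₂ hp₂
          by_contra hne
          have hmemP : ∀ p ∈ P, ¬ covered M p ∧ 0 < H.degree p := by
            intro p hp
            simpa [hPdef] using hp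
          set A : Set ℕ := {d | ∃ M₀ u w, IsMatchingFinset H M₀ ∧ M₀.card = s ∧ u ≠ w ∧
            ¬ covered M₀ u ∧ ¬ covered M₀ w ∧ 0 < H.degree u ∧ 0 < H.degree w ∧
            H.dist u w = d} with hAdef
          have hAne : H.dist p₁ p₂ ∈ A :=
            ⟨M, p₁, p₂, hM, hMc, hne, (hmemP _ hp₁).1, (hmemP _ hp₂).1,
              (hmemP _ hp₁).2, (hmemP _ hp₂).2, rfl⟩
          obtain ⟨M₀, u, w, hM₀, hM₀c, huw, hcu, hcw, hdu, hdw, hdist⟩ :=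
            Nat.sInf_mem (⟨_, hAne⟩ : A.Nonempty)
          set d := sInf A with hddef
          have hreach : H.Reachable u w := hB1 u w hdu hdw
          have hd1 : 1 ≤ d := by
            have := hreach.pos_dist_of_ne huw
            omega
          obtain ⟨Wk, hWk⟩ := hreach.exists_walk_length_eq_dist
          cases Wk with
          | nil => exact huw rfl
          | @cons _ t _ hadj W₂ =>
            rw [SimpleGraph.Walk.length_cons, hdist] at hWk
            have hdtw_le : H.dist t w ≤ d - 1 := by
              have := SimpleGraph.dist_le W₂
              omega
            have hdtw_ge : d - 1 ≤ H.dist t w := by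
              have hrtw : H.Reachable t w := ⟨W₂⟩
              obtain ⟨W₃, hW₃⟩ := hrtw.exists_walk_length_eq_dist
              have := SimpleGraph.dist_le (SimpleGraph.Walk.cons hadj W₃)
              rw [SimpleGraph.Walk.length_cons, hW₃, hdist] at this
              omega
            have hdtw : H.dist t w = d - 1 := le_antisymm hdtw_le hdtw_ge
            by_cases hd2 : 2 ≤ d
            · -- main case
              have htw : t ≠ w := by
                rintro rfl
                rw [SimpleGraph.dist_self] at hdtw
                omega
              have htu : t ≠ u := fun h => hadj.ne h.symm
              have hdt : 0 < H.degree t := (H.degree_pos_iff_exists_adj t).2 ⟨u, hadj.symm⟩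
              obtain ⟨N, hN, hNc, hNt⟩ := allav t
              have hdut1 : H.dist u t = 1 := by
                refine le_antisymm ?_ ?_
                · have := SimpleGraph.dist_le (SimpleGraph.Walk.cons hadj SimpleGraph.Walk.nil)
                  simpa using this
                · exact hadj.reachable.pos_dist_of_ne hadj.ne
              have hNu : covered N u := by
                by_contra hc
                have h1A : (1 : ℕ) ∈ A :=
                  ⟨N, u, t, hN, hNc, hadj.ne, hc, hNt, hdu, hdt, hdut1⟩
                have := Nat.sInf_le h1A
                omega
              have hNw : covered N w := by
                by_contra hc
                have hA2 : (d - 1) ∈ A :=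
                  ⟨N, t, w, hN, hNc, htw, hNt, hc, hdt, hdw, hdtw⟩
                have := Nat.sInf_le hA2
                omega
              obtain ⟨M', y, hM', hM'c, hM't, hM'cov⟩ :=
                flip (H.edgeFinset.card) H s M₀ N t le_rfl hM₀ hN hM₀c hNc hmaxH hNt
              by_cases huy : u = y
              · have hcw' : ¬ covered M' w := by
                  intro hc
                  rcases hM'cov w hc with h | h
                  · exact hcw h
                  · exact huw (by rw [huy, ← h])
                have hA2 : (d - 1) ∈ A :=
                  ⟨M', t, w, hM', hM'c, htw, hM't, hcw', hdt, hdw, hdtw⟩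
                have := Nat.sInf_le hA2
                omega
              · have hcu' : ¬ covered M' u := by
                  intro hc
                  rcases hM'cov u hc with h | h
                  · exact hcu h
                  · exact huy h
                have hdtu1 : H.dist t u = 1 := by
                  refine le_antisymm ?_ ?_
                  · have := SimpleGraph.dist_le (SimpleGraph.Walk.cons hadj.symm SimpleGraph.Walk.nil)
                    simpa using this
                  · exact hadj.symm.reachable.pos_dist_of_ne (fun h => hadj.ne h.symm)
                have h1A : (1 : ℕ) ∈ A :=
                  ⟨M', t, u, hM', hM'c, htu, hM't, hcu', hdt, hdu, hdtu1⟩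
                have := Nat.sInf_le h1A
                omega
            · -- d = 1 : u adjacent to w, augment
              have hlen0 : W₂.length = 0 := by omega
              have htw : t = w := SimpleGraph.Walk.eq_of_length_eq_zero hlen0
              subst htw
              obtain ⟨hmat, hcard⟩ := matching_insert hM₀ hadj hcu hcw
              have := hmaxH _ hmat
              omega
        -- final counting
        have hkey : ∀ v, v ∉ covF M → v ∉ P → H.degree v = 0 := by
          intro v hv hp
          by_contra h
          apply hp
          simp only [hPdef, Finset.mem_filter, Finset.mem_univ, true_and]
          refine ⟨?_, by omega⟩
          intro hc
          apply hv
          simp only [covF, Finset.mem_filter, Finset.mem_univ, true_and]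
          exact hc
        set W := covF M ∪ P with hWdef
        have hsum : ∑ v, H.degree v = ∑ v ∈ W, H.degree v := by
          symm
          apply Finset.sum_subset (Finset.subset_univ W)
          intro x _ hx
          exact hkey x (fun h => hx (Finset.mem_union_left _ h))
            (fun h => hx (Finset.mem_union_right _ h))
        have hbound : ∑ v ∈ W, H.degree v ≤ W.card * (2 * s) := by
          have := Finset.sum_le_card_nsmul W (fun v => H.degree v) (2 * s)
            (fun x _ => degle x)
          simpa [smul_eq_mul] using this
        have hWc : W.card ≤ 2 * s + 1 := by
          calc W.card ≤ (covF M).card + P.card := Finset.card_union_le _ _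
            _ ≤ 2 * s + 1 := by
                have := card_covF_le M
                rw [hMc] at this
                omega
        have h2E : 2 * H.edgeFinset.card = ∑ v, H.degree v :=
          (SimpleGraph.sum_degrees_eq_twice_card_edges H).symm
        have hfin : 2 * H.edgeFinset.card ≤ (2 * s + 1) * (2 * s) := by
          rw [h2E, hsum]
          exact le_trans hbound (Nat.mul_le_mul hWc le_rfl)
        have hexp : (2 * s + 1) * (2 * s) = 2 * (s * (2 * s + 1)) := by ring
        have hcardle : H.edgeFinset.card ≤ s * (2 * s + 1) := by omega
        calc H.edgeFinset.card ≤ s * (2 * s + 1) := hcardle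
          _ ≤ s * D := Nat.mul_le_mul le_rfl (by omega)

lemma delVert_adj {G : SimpleGraph V} {x : V} {a b : {v : V // v ≠ x}} :
    (delVert G x).Adj a b ↔ G.Adj a.val b.val := Iff.rfl

lemma mn_delVert_le [Fintype V] (G : SimpleGraph V) (x : V) :
    matchingNumber (delVert G x) ≤ matchingNumber G := by
  obtain ⟨M, hM, hMc⟩ := exists_max_matching (delVert G x)
  set f : Sym2 {v : V // v ≠ x} → Sym2 V := Sym2.map Subtype.val with hf
  have hinj : Function.Injective f := Sym2.map.injective Subtype.val_injective
  have hedge : ∀ e ∈ (delVert G x).edgeSet, f e ∈ G.edgeSet := by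
    intro e he
    induction e using Sym2.ind with
    | _ a b =>
      rw [SimpleGraph.mem_edgeSet] at he
      rw [hf, Sym2.map_pair_eq, SimpleGraph.mem_edgeSet]
      exact delVert_adj.1 he
  have hmat : IsMatchingFinset G (M.image f) := by
    constructor
    · intro e' he'
      obtain ⟨e, he, rfl⟩ := Finset.mem_image.1 (Finset.mem_coe.1 he')
      exact hedge e (hM.1 (Finset.mem_coe.2 he))
    · intro e' he' f' hf' hne v hv
      obtain ⟨e, he, rfl⟩ := Finset.mem_image.1 he'
      obtain ⟨g, hg, rfl⟩ := Finset.mem_image.1 hf'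
      obtain ⟨a, ha, hav⟩ := Sym2.mem_map.1 hv.1
      obtain ⟨b, hb, hbv⟩ := Sym2.mem_map.1 hv.2
      have hab : a = b := Subtype.val_injective (hav.trans hbv.symm)
      subst hab
      exact hne (congrArg f (unique_edge hM he hg ha hb))
  have hcard : (M.image f).card = matchingNumber (delVert G x) := by
    rw [Finset.card_image_of_injective M hinj, hMc]
  rw [← hcard]
  exact card_le_mn hmat

lemma mn_del_le_delVert [Fintype V] (G : SimpleGraph V) (x y₀ : V) (hy₀ : y₀ ≠ x) :
    matchingNumber (G.deleteEdges {e | x ∈ e}) ≤ matchingNumber (delVert G x) := by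
  obtain ⟨M, hM, hMc⟩ := exists_max_matching (G.deleteEdges {e | x ∈ e})
  set φ : V → {v : V // v ≠ x} := fun v => if h : v = x then ⟨y₀, hy₀⟩ else ⟨v, h⟩ with hφ
  have hval : ∀ v (hv : v ≠ x), (φ v).val = v := by
    intro v hv
    simp [hφ, dif_neg hv]
  set f : Sym2 V → Sym2 {v : V // v ≠ x} := Sym2.map φ with hf
  have hMe : ∀ e ∈ M, e ∈ G.edgeSet ∧ x ∉ e := by
    intro e he
    exact (delv_edge G x e).1 (hM.1 (Finset.mem_coe.2 he))
  have hretr : ∀ e : Sym2 V, x ∉ e → Sym2.map Subtype.val (f e) = e := by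
    intro e hx
    induction e using Sym2.ind with
    | _ a b =>
      rw [hf, Sym2.map_pair_eq, Sym2.map_pair_eq]
      have ha : a ≠ x := fun h => hx (by rw [h]; simp)
      have hb : b ≠ x := fun h => hx (by rw [h]; simp)
      rw [hval a ha, hval b hb]
  have hmat : IsMatchingFinset (delVert G x) (M.image f) := by
    constructor
    · intro e' he'
      obtain ⟨e, he, rfl⟩ := Finset.mem_image.1 (Finset.mem_coe.1 he')
      obtain ⟨hG, hx⟩ := hMe e he
      revert hG hx
      induction e using Sym2.ind with
      | _ a b =>
        intro hG hx
        have ha : a ≠ x := fun h => hx (by rw [h]; simp)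
        have hb : b ≠ x := fun h => hx (by rw [h]; simp)
        rw [SimpleGraph.mem_edgeSet] at hG
        rw [hf, Sym2.map_pair_eq, SimpleGraph.mem_edgeSet, delVert_adj, hval a ha, hval b hb]
        exact hG
    · intro e' he' f' hf' hne v hv
      obtain ⟨e, he, rfl⟩ := Finset.mem_image.1 he'
      obtain ⟨g, hg, rfl⟩ := Finset.mem_image.1 hf'
      obtain ⟨a, ha, hav⟩ := Sym2.mem_map.1 hv.1
      obtain ⟨b, hb, hbv⟩ := Sym2.mem_map.1 hv.2
      have hae : a ≠ x := fun h => (hMe e he).2 (h ▸ ha)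
      have hbe : b ≠ x := fun h => (hMe g hg).2 (h ▸ hb)
      have hab : a = b := by
        have h1 : (φ a).val = a := hval a hae
        have h2 : (φ b).val = b := hval b hbe
        rw [← h1, ← h2, hav, hbv]
      subst hab
      exact hne (congrArg f (unique_edge hM he hg ha hb))
  have hinjM : Set.InjOn f M := by
    intro e₁ h₁ e₂ h₂ heq
    have := congrArg (Sym2.map (Subtype.val : {v : V // v ≠ x} → V)) heq
    rwa [hretr e₁ (hMe e₁ h₁).2, hretr e₂ (hMe e₂ h₂).2] at this
  have hcard : (M.image f).card = matchingNumber (G.deleteEdges {e | x ∈ e}) := by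
    rw [Finset.card_image_of_injOn hinjM, hMc]
  rw [← hcard]
  exact card_le_mn hmat


end Helper

theorem stmt_2 {V : Type*} [Fintype V] (G : SimpleGraph V) (Δ : ℕ) (hΔ : 2 ≤ Δ)
    (hiso : ∀ v : V, 0 < G.degree v)
    (hν : matchingNumber G = (Δ + 1) / 2)
    (hmax : G.maxDegree = Δ)
    (hE : G.edgeFinset.card = (2 * ((Δ + 1) / 2) + 1) * Δ / 2) :
    ∀ x : V, matchingNumber (delVert G x) = matchingNumber G := by
  intro x
  by_contra hne
  obtain ⟨y₀, hy₀adj⟩ := (G.degree_pos_iff_exists_adj x).1 (hiso x)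
  have hy₀ : y₀ ≠ x := hy₀adj.ne'
  have h1 : matchingNumber (delVert G x) ≤ matchingNumber G := Helper.mn_delVert_le G x
  have h2 : matchingNumber (G.deleteEdges {e | x ∈ e}) ≤ matchingNumber (delVert G x) :=
    Helper.mn_del_le_delVert G x y₀ hy₀
  set H := G.deleteEdges {e | x ∈ e} with hH
  set ν := matchingNumber G with hνdef
  have hν1 : 1 ≤ ν := by omega
  have hHν : matchingNumber H ≤ ν - 1 := by
    have : matchingNumber (delVert G x) ≠ ν := hne
    omega
  have hdegH : ∀ v, H.degree v ≤ Δ := fun v =>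
    le_trans (Helper.degree_mono (SimpleGraph.deleteEdges_le _) v)
      (hmax ▸ G.degree_le_maxDegree v)
  have h2m : 2 * matchingNumber H < Δ := by omega
  have hcore := Helper.core Δ (H.edgeFinset.card) H le_rfl h2m hdegH
  -- edge count of H
  have hEF : H.edgeFinset = G.edgeFinset \ G.incidenceFinset x := by
    ext g
    simp only [SimpleGraph.mem_edgeFinset, Finset.mem_sdiff,
      SimpleGraph.mem_incidenceFinset, SimpleGraph.incidenceSet, Set.mem_setOf_eq,
      hH, Helper.delv_edge]
    tauto
  have hsub : G.incidenceFinset x ⊆ G.edgeFinset := by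
    intro g hg
    simp only [SimpleGraph.mem_incidenceFinset, SimpleGraph.incidenceSet,
      Set.mem_setOf_eq] at hg
    exact SimpleGraph.mem_edgeFinset.2 hg.1
  have hcardH : H.edgeFinset.card = G.edgeFinset.card - G.degree x := by
    rw [hEF, Finset.card_sdiff_of_subset hsub, SimpleGraph.card_incidenceFinset_eq_degree]
  have hdle : G.degree x ≤ G.edgeFinset.card := by
    rw [← SimpleGraph.card_incidenceFinset_eq_degree]
    exact Finset.card_le_card hsub
  have hdxΔ : G.degree x ≤ Δ := hmax ▸ G.degree_le_maxDegree x
  have hdx1 : 1 ≤ G.degree x := hiso x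
  -- arithmetic
  have hq : matchingNumber H * Δ ≤ (ν - 1) * Δ := Nat.mul_le_mul hHν le_rfl
  have hq2 : (ν - 1) * Δ + Δ = ν * Δ := by
    have h : (ν - 1) * Δ + Δ = ((ν - 1) + 1) * Δ := by ring
    rw [h, (by omega : ν - 1 + 1 = ν)]
  have hq3 : Δ ≤ ν * Δ := Nat.le_mul_of_pos_left Δ (by omega)
  have hEG : G.edgeFinset.card = (2 * (ν * Δ) + Δ) / 2 := by
    rw [hE, hν]
    congr 1
    rw [hν] at hνdef
    rw [hνdef]
    ring
  omega
end

section
/- Let Δ ≥ 2 and let G be a simple graph with no isolated vertices satisfying ν(G) = ⌈Δ/2⌉, Δ(G) = Δ, and |E(G)| = ⌊(2⌈Δ/2⌉+1)·Δ/2⌋. Then G is connected. -/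
open scoped Classical

set_option linter.unusedSectionVars false
set_option linter.unusedVariables false
set_option maxHeartbeats 1600000

section Aux
variable {V : Type*} [Fintype V]

lemma aux_out_mk (e : Sym2 V) : Quot.mk (Sym2.Rel V) e.out = e := Quot.out_eq e

lemma aux_mem_out {v : V} {e : Sym2 V} : v ∈ e ↔ v = e.out.1 ∨ v = e.out.2 := by
  conv_lhs => rw [← aux_out_mk e]
  exact Sym2.mem_iff

lemma aux_adj_out {H : SimpleGraph V} {e : Sym2 V} (he : e ∈ H.edgeSet) :
    H.Adj e.out.1 e.out.2 := by
  rw [← aux_out_mk e] at he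
  exact he

lemma aux_out_ne {H : SimpleGraph V} {e : Sym2 V} (he : e ∈ H.edgeSet) :
    e.out.1 ≠ e.out.2 := (aux_adj_out he).ne

/-- Vertices covered by a set of edges. -/
noncomputable def covFin (M : Finset (Sym2 V)) : Finset V :=
  Finset.univ.filter (fun v => ∃ e ∈ M, v ∈ e)

lemma mem_covFin {M : Finset (Sym2 V)} {v : V} : v ∈ covFin M ↔ ∃ e ∈ M, v ∈ e := by
  simp [covFin]

lemma covFin_card {H : SimpleGraph V} {M : Finset (Sym2 V)} (hM : IsMatchingFinset H M) :
    (covFin M).card = 2 * M.card := by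
  have : covFin M = M.biUnion (fun e => {e.out.1, e.out.2}) := by
    ext v
    simp only [mem_covFin, Finset.mem_biUnion, Finset.mem_insert, Finset.mem_singleton]
    constructor
    · rintro ⟨e, he, hv⟩; exact ⟨e, he, aux_mem_out.mp hv⟩
    · rintro ⟨e, he, hv⟩; exact ⟨e, he, aux_mem_out.mpr hv⟩
  rw [this, Finset.card_biUnion, Finset.sum_congr rfl (fun e he => ?_), Finset.sum_const,
    smul_eq_mul, mul_comm]
  · exact Finset.card_pair (aux_out_ne (hM.1 he))
  · intro e he f hf hef
    rw [Function.onFun, Finset.disjoint_left]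
    intro v hv hv'
    simp only [Finset.mem_insert, Finset.mem_singleton] at hv hv'
    exact hM.2 e he f hf hef v ⟨aux_mem_out.mpr hv, aux_mem_out.mpr hv'⟩

/-- A maximum matching cannot be extended by an edge with both ends exposed. -/
lemma aux_card_le_nu (H : SimpleGraph V) {M : Finset (Sym2 V)} (hM : IsMatchingFinset H M) :
    M.card ≤ matchingNumber H := by
  apply le_csSup
  · refine ⟨Fintype.card (Sym2 V), ?_⟩
    rintro n ⟨N, _, rfl⟩
    exact N.card_le_univ
  · exact ⟨M, hM, rfl⟩

lemma aux_exists_max (H : SimpleGraph V) :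
    ∃ M : Finset (Sym2 V), IsMatchingFinset H M ∧ M.card = matchingNumber H := by
  have h : matchingNumber H ∈ {n | ∃ M : Finset (Sym2 V), IsMatchingFinset H M ∧ M.card = n} := by
    apply Nat.sSup_mem
    · exact ⟨0, ∅, ⟨by simp, by simp⟩, rfl⟩
    · refine ⟨Fintype.card (Sym2 V), ?_⟩
      rintro n ⟨N, _, rfl⟩
      exact N.card_le_univ
  exact h

lemma aux_matching_mono {H H' : SimpleGraph V} (h : H ≤ H') {M : Finset (Sym2 V)}
    (hM : IsMatchingFinset H M) : IsMatchingFinset H' M :=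
  ⟨fun e he => SimpleGraph.edgeSet_mono h (hM.1 he), hM.2⟩

lemma aux_nu_mono {H H' : SimpleGraph V} (h : H ≤ H') :
    matchingNumber H ≤ matchingNumber H' := by
  obtain ⟨M, hM, hc⟩ := aux_exists_max H
  rw [← hc]
  exact aux_card_le_nu H' (aux_matching_mono h hM)

lemma aux_insert_matching {H : SimpleGraph V} {M : Finset (Sym2 V)} (hM : IsMatchingFinset H M)
    (hMc : M.card = matchingNumber H)
    {a b : V} (hab : H.Adj a b) (ha : ∀ e ∈ M, a ∉ e) (hb : ∀ e ∈ M, b ∉ e) :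
    False := by
  have hne : s(a, b) ∉ M := fun h => ha _ h (by simp)
  have hmatch : IsMatchingFinset H (insert s(a, b) M) := by
    constructor
    · intro e he
      rcases Finset.mem_insert.mp (by exact_mod_cast he) with rfl | h
      · exact hab
      · exact hM.1 h
    · intro e he f hf hef v hv
      rcases Finset.mem_insert.mp he with rfl | he' <;> rcases Finset.mem_insert.mp hf with rfl | hf'
      · exact hef rfl
      · rcases Sym2.mem_iff.mp hv.1 with rfl | rfl
        · exact ha _ hf' hv.2
        · exact hb _ hf' hv.2
      · rcases Sym2.mem_iff.mp hv.2 with rfl | rfl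
        · exact ha _ he' hv.1
        · exact hb _ he' hv.1
      · exact hM.2 e he' f hf' hef v hv
  have h1 : (insert s(a, b) M).card = M.card + 1 := Finset.card_insert_of_notMem hne
  have h2 := aux_card_le_nu H hmatch
  omega


/-- Kernel: if every vertex is inessential, then no maximum matching exposes two
vertices in the same connected component. -/
lemma aux_kernel (H : SimpleGraph V)
    (hin : ∀ v : V, matchingNumber (H.deleteEdges (H.incidenceSet v)) = matchingNumber H)
    {M0 : Finset (Sym2 V)} (hM0 : IsMatchingFinset H M0) (hM0c : M0.card = matchingNumber H)
    {u0 w0 : V} (hu0 : ∀ e ∈ M0, u0 ∉ e) (hw0 : ∀ e ∈ M0, w0 ∉ e) (huw0 : u0 ≠ w0)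
    (hr0 : H.Reachable u0 w0) : False := by
  set k := matchingNumber H with hk
  have hex : ∃ d : ℕ, ∃ (N : Finset (Sym2 V)) (x y : V),
      IsMatchingFinset H N ∧ N.card = k ∧ (∀ e ∈ N, x ∉ e) ∧ (∀ e ∈ N, y ∉ e) ∧ x ≠ y ∧
      H.Reachable x y ∧ H.dist x y = d :=
    ⟨H.dist u0 w0, M0, u0, w0, hM0, hM0c, hu0, hw0, huw0, hr0, rfl⟩
  set d0 := Nat.find hex with hd0def
  obtain ⟨M, a, b, hM, hMc, hae, hbe, hab, hreach, hdist⟩ := Nat.find_spec hex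
  have hmin : ∀ (N : Finset (Sym2 V)) (x y : V), IsMatchingFinset H N → N.card = k →
      (∀ e ∈ N, x ∉ e) → (∀ e ∈ N, y ∉ e) → x ≠ y → H.Reachable x y → d0 ≤ H.dist x y := by
    intro N x y h1 h2 h3 h4 h5 h6
    by_contra hlt
    exact Nat.find_min hex (show H.dist x y < d0 by omega)
      ⟨N, x, y, h1, h2, h3, h4, h5, h6, rfl⟩
  have hpos : 0 < d0 := by
    have := hreach.pos_dist_of_ne hab
    omega
  obtain ⟨p, hp⟩ := hreach.exists_walk_length_eq_dist
  rw [hdist] at hp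
  cases p with
  | nil => exact hab rfl
  | @cons _ t _ h q =>
    simp only [SimpleGraph.Walk.length_cons] at hp
    by_cases hq0 : q.length = 0
    · obtain rfl := SimpleGraph.Walk.eq_of_length_eq_zero hq0
      exact aux_insert_matching hM hMc h hae hbe
    · -- d0 ≥ 2
      have hd2 : 2 ≤ d0 := by omega
      have hat : a ≠ t := h.ne
      have htb : t ≠ b := by
        rintro rfl
        have : H.dist a t ≤ 1 := by simpa using SimpleGraph.dist_le h.toWalk
        omega
      have hdtb : H.dist t b ≤ d0 - 1 := by
        have := SimpleGraph.dist_le q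
        omega
      have hdat : H.dist a t ≤ 1 := by
        simpa using SimpleGraph.dist_le h.toWalk
      -- t is covered by M
      have htcov : ∃ e ∈ M, t ∈ e := by
        by_contra hte
        push_neg at hte
        have := hmin M t b hM hMc hte hbe htb ⟨q⟩
        omega
      -- the family of maximum matchings exposing t
      set T : Finset (Finset (Sym2 V)) := H.edgeFinset.powerset.filter
        (fun N => IsMatchingFinset H N ∧ N.card = k ∧ ∀ e ∈ N, t ∉ e) with hT
      have hTne : T.Nonempty := by
        obtain ⟨Mt, hMt, hMtc⟩ := aux_exists_max (H.deleteEdges (H.incidenceSet t))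
        have hMt' : IsMatchingFinset H Mt :=
          aux_matching_mono (SimpleGraph.deleteEdges_le _) hMt
        have hMtt : ∀ e ∈ Mt, t ∉ e := by
          intro e he hte
          have h1 := hMt.1 he
          rw [SimpleGraph.edgeSet_deleteEdges] at h1
          exact h1.2 ⟨h1.1, hte⟩
        refine ⟨Mt, Finset.mem_filter.mpr ⟨Finset.mem_powerset.mpr ?_, hMt', ?_, hMtt⟩⟩
        · intro e he
          exact SimpleGraph.mem_edgeFinset.mpr (hMt'.1 he)
        · rw [hMtc, hin t]
      obtain ⟨N, hNT, hNmax⟩ := T.exists_max_image (fun N' => (M ∩ N').card) hTne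
      obtain ⟨hNsub, hNm, hNc, hNt⟩ := Finset.mem_filter.mp hNT
      -- a and b are covered by N
      have hacov : ∃ e ∈ N, a ∈ e := by
        by_contra hne
        push_neg at hne
        have := hmin N a t hNm hNc hne hNt hat ⟨h.toWalk⟩
        omega
      have hbcov : ∃ e ∈ N, b ∈ e := by
        by_contra hne
        push_neg at hne
        have := hmin N t b hNm hNc hNt hne htb ⟨q⟩
        omega
      -- counting exposed vertices
      have hc1 : (covFin M).card = 2 * k := by rw [covFin_card hM, hMc]
      have hc2 : (covFin N).card = 2 * k := by rw [covFin_card hNm, hNc]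
      have hsub2 : ({a, b} : Finset V) ⊆ covFin N \ covFin M := by
        intro v hv
        rcases Finset.mem_insert.mp hv with rfl | hv
        · exact Finset.mem_sdiff.mpr ⟨mem_covFin.mpr hacov,
            fun hc => (mem_covFin.mp hc).elim (fun e he => hae e he.1 he.2)⟩
        · rw [Finset.mem_singleton] at hv; subst hv
          exact Finset.mem_sdiff.mpr ⟨mem_covFin.mpr hbcov,
            fun hc => (mem_covFin.mp hc).elim (fun e he => hbe e he.1 he.2)⟩
      have h2le : 2 ≤ (covFin N \ covFin M).card := by
        have := Finset.card_le_card hsub2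
        rwa [Finset.card_pair hab] at this
      have hcs : (covFin M \ covFin N).card = (covFin N \ covFin M).card :=
        Finset.card_sdiff_comm (hc1.trans hc2.symm)
      obtain ⟨x, hx, hxt⟩ := Finset.exists_mem_ne (by omega :
        1 < (covFin M \ covFin N).card) t
      obtain ⟨hxM, hxN'⟩ := Finset.mem_sdiff.mp hx
      have hxN : ∀ e ∈ N, x ∉ e := by
        intro e he hxe
        exact hxN' (mem_covFin.mpr ⟨e, he, hxe⟩)
      obtain ⟨e, heM, hxe⟩ := mem_covFin.mp hxM
      obtain ⟨y, rfl⟩ := Sym2.mem_iff_exists.mp hxe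
      have hadjxy : H.Adj x y := hM.1 heM
      have hxy : x ≠ y := hadjxy.ne
      -- y is covered by N
      have hycov : ∃ f ∈ N, y ∈ f := by
        by_contra hyc
        push_neg at hyc
        exact aux_insert_matching hNm hNc hadjxy hxN hyc
      obtain ⟨f, hfN, hyf⟩ := hycov
      obtain ⟨z, rfl⟩ := Sym2.mem_iff_exists.mp hyf
      have hadjyz : H.Adj y z := hNm.1 hfN
      have hyz : y ≠ z := hadjyz.ne
      have hzx : z ≠ x := by
        rintro rfl
        exact hxN _ hfN (by simp)
      have hef : s(x, y) ≠ s(y, z) := by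
        intro hcontra
        have : x ∈ s(y, z) := hcontra ▸ (by simp : x ∈ s(x, y))
        exact hxN _ hfN this
      have hfM : s(y, z) ∉ M := by
        intro hfM
        exact hM.2 _ heM _ hfM hef y ⟨by simp, by simp⟩
      set N1 : Finset (Sym2 V) := insert s(x, y) (N.erase s(y, z)) with hN1
      have hxyN : s(x, y) ∉ N := fun hc => hxN _ hc (by simp)
      have hN1m : IsMatchingFinset H N1 := by
        constructor
        · intro e' he'
          rcases Finset.mem_insert.mp (by exact_mod_cast he') with rfl | h'
          · exact hadjxy
          · exact hNm.1 (Finset.mem_of_mem_erase h')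
        · intro e1 he1 e2 he2 hne v hv
          rcases Finset.mem_insert.mp he1 with rfl | he1' <;>
            rcases Finset.mem_insert.mp he2 with rfl | he2'
          · exact hne rfl
          · rcases Sym2.mem_iff.mp hv.1 with rfl | rfl
            · exact hxN _ (Finset.mem_of_mem_erase he2') hv.2
            · exact hNm.2 _ hfN _ (Finset.mem_of_mem_erase he2')
                (fun hc => (Finset.mem_erase.mp he2').1 hc.symm) v ⟨by simp, hv.2⟩
          · rcases Sym2.mem_iff.mp hv.2 with rfl | rfl
            · exact hxN _ (Finset.mem_of_mem_erase he1') hv.1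
            · exact hNm.2 _ hfN _ (Finset.mem_of_mem_erase he1')
                (fun hc => (Finset.mem_erase.mp he1').1 hc.symm) v ⟨by simp, hv.1⟩
          · exact hNm.2 _ (Finset.mem_of_mem_erase he1') _ (Finset.mem_of_mem_erase he2')
              hne v hv
      have hkpos : 0 < k := by
        rw [← hNc]
        exact Finset.card_pos.mpr ⟨_, hfN⟩
      have hN1c : N1.card = k := by
        rw [hN1, Finset.card_insert_of_notMem (fun hc => hxyN (Finset.mem_of_mem_erase hc)),
          Finset.card_erase_of_mem hfN, hNc]
        omega
      have hN1t : ∀ e ∈ N1, t ∉ e := by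
        intro e' he' hte
        rcases Finset.mem_insert.mp he' with rfl | h'
        · rcases Sym2.mem_iff.mp hte with rfl | rfl
          · exact hxt rfl
          · exact hNt _ hfN (by simp)
        · exact hNt _ (Finset.mem_of_mem_erase h') hte
      have hN1T : N1 ∈ T := by
        refine Finset.mem_filter.mpr ⟨Finset.mem_powerset.mpr ?_, hN1m, hN1c, hN1t⟩
        intro e' he'
        exact SimpleGraph.mem_edgeFinset.mpr (hN1m.1 he')
      -- intersection grows
      have hgrow : insert s(x, y) (M ∩ N) ⊆ M ∩ N1 := by
        intro g hg
        rcases Finset.mem_insert.mp hg with rfl | hg'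
        · exact Finset.mem_inter.mpr ⟨heM, Finset.mem_insert_self _ _⟩
        · obtain ⟨hg1, hg2⟩ := Finset.mem_inter.mp hg'
          refine Finset.mem_inter.mpr ⟨hg1, Finset.mem_insert.mpr (Or.inr ?_)⟩
          exact Finset.mem_erase.mpr ⟨fun hc => hfM (hc ▸ hg1), hg2⟩
      have hxyMN : s(x, y) ∉ M ∩ N := fun hc => hxyN (Finset.mem_inter.mp hc).2
      have hcard : (M ∩ N).card + 1 ≤ (M ∩ N1).card := by
        have := Finset.card_le_card hgrow
        rwa [Finset.card_insert_of_notMem hxyMN] at this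
      have := hNmax N1 hN1T
      omega


/-- The all-inessential case: edge bound via components. -/
lemma aux_F (H : SimpleGraph V) (Δ : ℕ)
    (hin : ∀ v : V, matchingNumber (H.deleteEdges (H.incidenceSet v)) = matchingNumber H)
    (hΔ : 2 * matchingNumber H + 1 ≤ Δ) :
    H.edgeFinset.card ≤ matchingNumber H * Δ := by
  obtain ⟨M, hM, hMc⟩ := aux_exists_max H
  set k := matchingNumber H with hk
  set f : Sym2 V → H.ConnectedComponent := fun e => H.connectedComponentMk e.out.1 with hf
  have hclass : ∀ {e : Sym2 V}, e ∈ H.edgeSet → ∀ {v : V}, v ∈ e →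
      H.connectedComponentMk v = f e := by
    intro e he v hv
    rcases aux_mem_out.mp hv with rfl | rfl
    · rfl
    · exact (SimpleGraph.ConnectedComponent.sound ⟨(aux_adj_out he).toWalk⟩).symm
  have hEsum : H.edgeFinset.card =
      ∑ A : H.ConnectedComponent, (H.edgeFinset.filter (fun e => f e = A)).card :=
    Finset.card_eq_sum_card_fiberwise (fun e _ => Finset.mem_univ _)
  have hMsum : M.card = ∑ A : H.ConnectedComponent, (M.filter (fun e => f e = A)).card :=
    Finset.card_eq_sum_card_fiberwise (fun e _ => Finset.mem_univ _)
  have hper : ∀ A : H.ConnectedComponent,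
      (H.edgeFinset.filter (fun e => f e = A)).card ≤ (M.filter (fun e => f e = A)).card * Δ := by
    intro A
    set MA := M.filter (fun e => f e = A) with hMA
    set mA := MA.card with hmA
    have hMAsub : MA ⊆ M := Finset.filter_subset _ _
    have hMAm : IsMatchingFinset H MA :=
      ⟨fun e he => hM.1 (hMAsub (by exact_mod_cast he)),
       fun e he g hg => hM.2 _ (hMAsub he) _ (hMAsub hg)⟩
    set suppA := Finset.univ.filter (fun v => H.connectedComponentMk v = A) with hsupp
    have hcov_sub : covFin MA ⊆ suppA := by
      intro v hv
      obtain ⟨e, he, hve⟩ := mem_covFin.mp hv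
      have heE : e ∈ H.edgeSet := hMAm.1 he
      have hfe : f e = A := (Finset.mem_filter.mp he).2
      exact Finset.mem_filter.mpr ⟨Finset.mem_univ _, (hclass heE hve).trans hfe⟩
    have hexp : (suppA \ covFin MA).card ≤ 1 := by
      rw [Finset.card_le_one]
      intro x hx y hy
      by_contra hxy
      obtain ⟨hxA, hxc⟩ := Finset.mem_sdiff.mp hx
      obtain ⟨hyA, hyc⟩ := Finset.mem_sdiff.mp hy
      have hxe : ∀ e ∈ M, x ∉ e := by
        intro e he hxe
        refine hxc (mem_covFin.mpr ⟨e, Finset.mem_filter.mpr ⟨he, ?_⟩, hxe⟩)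
        rw [← hclass (hM.1 he) hxe]
        exact (Finset.mem_filter.mp hxA).2
      have hye : ∀ e ∈ M, y ∉ e := by
        intro e he hye
        refine hyc (mem_covFin.mpr ⟨e, Finset.mem_filter.mpr ⟨he, ?_⟩, hye⟩)
        rw [← hclass (hM.1 he) hye]
        exact (Finset.mem_filter.mp hyA).2
      have hreach : H.Reachable x y := by
        apply SimpleGraph.ConnectedComponent.exact
        rw [(Finset.mem_filter.mp hxA).2, (Finset.mem_filter.mp hyA).2]
      exact aux_kernel H hin hM hMc hxe hye hxy hreach
    have hsuppcard : suppA.card ≤ 2 * mA + 1 := by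
      have h1 : suppA ⊆ covFin MA ∪ (suppA \ covFin MA) := by
        intro v hv
        by_cases h : v ∈ covFin MA
        · exact Finset.mem_union_left _ h
        · exact Finset.mem_union_right _ (Finset.mem_sdiff.mpr ⟨hv, h⟩)
      have h2 := (Finset.card_le_card h1).trans (Finset.card_union_le _ _)
      rw [covFin_card hMAm] at h2
      omega
    have hinj : (H.edgeFinset.filter (fun e => f e = A)).card * 2 ≤
        suppA.card * (suppA.card - 1) := by
      have hmap := Finset.card_le_card_of_injOn
        (f := fun p : Sym2 V × Bool => cond p.2 p.1.out p.1.out.swap)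
        (s := (H.edgeFinset.filter (fun e => f e = A)) ×ˢ (Finset.univ : Finset Bool))
        (t := suppA.offDiag) ?_ ?_
      · rw [Finset.card_product, Finset.card_univ, Fintype.card_bool,
          Finset.offDiag_card] at hmap
        have : suppA.card * suppA.card - suppA.card = suppA.card * (suppA.card - 1) := by
          rw [Nat.mul_sub_one]
        omega
      · rintro ⟨e, be⟩ hp
        have hef := (Finset.mem_product.mp hp).1
        obtain ⟨heE', hfeA⟩ := Finset.mem_filter.mp hef
        have heE : e ∈ H.edgeSet := SimpleGraph.mem_edgeFinset.mp heE'
        have h1 : e.out.1 ∈ suppA := Finset.mem_filter.mpr ⟨Finset.mem_univ _, by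
          rw [hclass heE (aux_mem_out.mpr (Or.inl rfl))]; exact hfeA⟩
        have h2 : e.out.2 ∈ suppA := Finset.mem_filter.mpr ⟨Finset.mem_univ _, by
          rw [hclass heE (aux_mem_out.mpr (Or.inr rfl))]; exact hfeA⟩
        have hne := aux_out_ne heE
        cases be
        · exact Finset.mem_offDiag.mpr ⟨h2, h1, hne.symm⟩
        · exact Finset.mem_offDiag.mpr ⟨h1, h2, hne⟩
      · rintro ⟨e, be⟩ hp ⟨e', be'⟩ hp' heq
        dsimp only at heq
        have hef := (Finset.mem_product.mp hp).1
        have heE : e ∈ H.edgeSet :=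
          SimpleGraph.mem_edgeFinset.mp (Finset.mem_filter.mp hef).1
        have hkey : e = e' := by
          have h1 : Quot.mk (Sym2.Rel V) (cond be e.out e.out.swap) = e := by
            cases be
            · rw [Bool.cond_false]
              exact (Quot.sound (Sym2.Rel.swap (Quot.out e).2 (Quot.out e).1)).trans (aux_out_mk e)
            · rw [Bool.cond_true, aux_out_mk]
          have h2 : Quot.mk (Sym2.Rel V) (cond be' e'.out e'.out.swap) = e' := by
            cases be'
            · rw [Bool.cond_false]
              exact (Quot.sound (Sym2.Rel.swap (Quot.out e').2 (Quot.out e').1)).trans (aux_out_mk e')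
            · rw [Bool.cond_true, aux_out_mk]
          rw [← h1, ← h2, heq]
        subst hkey
        have hne := aux_out_ne heE
        cases be <;> cases be'
        · rfl
        · exfalso
          rw [Bool.cond_false, Bool.cond_true] at heq
          exact hne (congrArg Prod.fst heq).symm
        · exfalso
          rw [Bool.cond_true, Bool.cond_false] at heq
          exact hne (congrArg Prod.fst heq)
        · rfl
    have hmAk : mA ≤ k := by
      rw [hmA, hMA, ← hMc]
      exact Finset.card_le_card (Finset.filter_subset _ _)
    have hfinal : (H.edgeFinset.filter (fun e => f e = A)).card ≤ mA * (2 * mA + 1) := by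
      have h3 : suppA.card * (suppA.card - 1) ≤ (2 * mA + 1) * (2 * mA) :=
        Nat.mul_le_mul hsuppcard (by omega)
      have h4 : (2 * mA + 1) * (2 * mA) = (mA * (2 * mA + 1)) * 2 := by ring
      omega
    calc (H.edgeFinset.filter (fun e => f e = A)).card ≤ mA * (2 * mA + 1) := hfinal
      _ ≤ mA * Δ := Nat.mul_le_mul_left _ (by omega)
  calc H.edgeFinset.card = _ := hEsum
    _ ≤ ∑ A : H.ConnectedComponent, (M.filter (fun e => f e = A)).card * Δ :=
        Finset.sum_le_sum (fun A _ => hper A)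
    _ = (∑ A : H.ConnectedComponent, (M.filter (fun e => f e = A)).card) * Δ := by
        rw [Finset.sum_mul]
    _ = k * Δ := by rw [← hMsum, hMc]


lemma aux_degree_mono {H H' : SimpleGraph V} (h : H' ≤ H) (v : V)
    [Fintype (H'.neighborSet v)] [Fintype (H.neighborSet v)] :
    H'.degree v ≤ H.degree v := by
  apply Finset.card_le_card
  intro x hx
  rw [SimpleGraph.mem_neighborFinset] at hx ⊢
  exact h hx

lemma aux_del_card (H : SimpleGraph V) (v : V) :
    H.edgeFinset.card ≤ (H.deleteEdges (H.incidenceSet v)).edgeFinset.card + H.degree v := by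
  have h1 : (H.deleteEdges (H.incidenceSet v)).edgeFinset =
      H.edgeFinset \ H.incidenceFinset v := by
    ext e
    simp only [SimpleGraph.mem_edgeFinset, SimpleGraph.edgeSet_deleteEdges, Set.mem_diff,
      Finset.mem_sdiff, SimpleGraph.mem_incidenceFinset]
    try tauto
  rw [h1]
  have h2 := Finset.card_le_card_sdiff_add_card (s := H.edgeFinset) (t := H.incidenceFinset v)
  rw [SimpleGraph.card_incidenceFinset_eq_degree] at h2
  exact h2

lemma aux_C (m : ℕ) : ∀ (Δ : ℕ), 2 * m < Δ → ∀ H : SimpleGraph V,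
    (∀ v, H.degree v ≤ Δ) → matchingNumber H ≤ m → H.edgeFinset.card ≤ m * Δ := by
  induction m with
  | zero =>
    intro Δ hΔ H hdeg hν
    have hemp : H.edgeFinset = ∅ := by
      rw [Finset.eq_empty_iff_forall_notMem]
      intro e he
      have h1 : IsMatchingFinset H {e} := by
        constructor
        · intro g hg
          have : g = e := by simpa using hg
          subst this
          exact SimpleGraph.mem_edgeFinset.mp he
        · intro a ha b hb hab
          simp only [Finset.mem_singleton] at ha hb
          subst ha; subst hb
          exact absurd rfl hab
      have h2 := aux_card_le_nu H h1
      simp only [Finset.card_singleton] at h2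
      omega
    simp [hemp]
  | succ m ih =>
    intro Δ hΔ H hdeg hν
    rcases Nat.lt_or_ge (matchingNumber H) (m + 1) with hlt | hge
    · have := ih Δ (by omega) H hdeg (by omega)
      have h2 : m * Δ ≤ (m + 1) * Δ := Nat.mul_le_mul_right _ (by omega)
      omega
    · have hk : matchingNumber H = m + 1 := le_antisymm hν hge
      by_cases hess : ∃ v, matchingNumber (H.deleteEdges (H.incidenceSet v)) < m + 1
      · obtain ⟨v, hv⟩ := hess
        have hdeg' : ∀ x, (H.deleteEdges (H.incidenceSet v)).degree x ≤ Δ := fun x =>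
          le_trans (aux_degree_mono (SimpleGraph.deleteEdges_le _) x) (hdeg x)
        have hE' := ih Δ (by omega) (H.deleteEdges (H.incidenceSet v)) (fun x => by convert hdeg' x) (by omega)
        have hE'' : (H.deleteEdges (H.incidenceSet v)).edgeFinset.card ≤ m * Δ := by convert hE'
        have hcount := aux_del_card H v
        have hd := hdeg v
        have : (m + 1) * Δ = m * Δ + Δ := by ring
        omega
      · push_neg at hess
        have hin : ∀ x, matchingNumber (H.deleteEdges (H.incidenceSet x)) = matchingNumber H := by
          intro x
          have h1 : matchingNumber (H.deleteEdges (H.incidenceSet x)) ≤ matchingNumber H :=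
            aux_nu_mono (SimpleGraph.deleteEdges_le _)
          have h2 := hess x
          omega
        have := aux_F H Δ hin (by omega)
        rw [hk] at this
        exact this

lemma aux_nu_add (G G₁ G₂ : SimpleGraph V)
    (hsub : G.edgeSet = G₁.edgeSet ∪ G₂.edgeSet)
    (hcross : ∀ e₁ ∈ G₁.edgeSet, ∀ e₂ ∈ G₂.edgeSet, ∀ v : V, ¬(v ∈ e₁ ∧ v ∈ e₂)) :
    matchingNumber G = matchingNumber G₁ + matchingNumber G₂ := by
  apply le_antisymm
  · obtain ⟨M, hM, hMc⟩ := aux_exists_max G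
    rw [← hMc]
    have hM1 : IsMatchingFinset G₁ (M.filter (fun e => e ∈ G₁.edgeSet)) := by
      constructor
      · intro e he
        exact (Finset.mem_filter.mp (by exact_mod_cast he)).2
      · intro e he f hf
        exact hM.2 _ (Finset.mem_of_mem_filter _ he) _ (Finset.mem_of_mem_filter _ hf)
    have hM2 : IsMatchingFinset G₂ (M.filter (fun e => e ∉ G₁.edgeSet)) := by
      constructor
      · intro e he
        have h1 := Finset.mem_filter.mp (by exact_mod_cast he)
        have h2 : e ∈ G.edgeSet := hM.1 h1.1
        rw [hsub] at h2
        exact h2.resolve_left h1.2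
      · intro e he f hf
        exact hM.2 _ (Finset.mem_of_mem_filter _ he) _ (Finset.mem_of_mem_filter _ hf)
    have hsplit := Finset.card_filter_add_card_filter_not
      (s := M) (p := fun e => e ∈ G₁.edgeSet)
    have c1 := aux_card_le_nu G₁ hM1
    have c2 := aux_card_le_nu G₂ hM2
    omega
  · obtain ⟨M₁, hM1, hc1⟩ := aux_exists_max G₁
    obtain ⟨M₂, hM2, hc2⟩ := aux_exists_max G₂
    have hdisj : Disjoint M₁ M₂ := by
      rw [Finset.disjoint_left]
      intro e he1 he2
      exact hcross e (hM1.1 he1) e (hM2.1 he2) e.out.1 ⟨Sym2.out_fst_mem e, Sym2.out_fst_mem e⟩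
    have hun : IsMatchingFinset G (M₁ ∪ M₂) := by
      constructor
      · intro e he
        rcases Finset.mem_union.mp (by exact_mod_cast he) with h | h
        · rw [hsub]; exact Or.inl (hM1.1 h)
        · rw [hsub]; exact Or.inr (hM2.1 h)
      · intro e he f hf hef v hv
        rcases Finset.mem_union.mp he with h1 | h1 <;> rcases Finset.mem_union.mp hf with h2 | h2
        · exact hM1.2 e h1 f h2 hef v hv
        · exact hcross e (hM1.1 h1) f (hM2.1 h2) v hv
        · exact hcross f (hM1.1 h2) e (hM2.1 h1) v ⟨hv.2, hv.1⟩
        · exact hM2.2 e h1 f h2 hef v hv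
    have := aux_card_le_nu G hun
    rw [Finset.card_union_of_disjoint hdisj] at this
    omega

lemma aux_E_add (G G₁ G₂ : SimpleGraph V)
    (hsub : G.edgeSet = G₁.edgeSet ∪ G₂.edgeSet)
    (hcross : ∀ e₁ ∈ G₁.edgeSet, ∀ e₂ ∈ G₂.edgeSet, ∀ v : V, ¬(v ∈ e₁ ∧ v ∈ e₂)) :
    G.edgeFinset.card = G₁.edgeFinset.card + G₂.edgeFinset.card := by
  have hdisj : Disjoint G₁.edgeFinset G₂.edgeFinset := by
    rw [Finset.disjoint_left]
    intro e he1 he2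
    rw [SimpleGraph.mem_edgeFinset] at he1 he2
    exact hcross e he1 e he2 e.out.1 ⟨Sym2.out_fst_mem e, Sym2.out_fst_mem e⟩
  have hun : G.edgeFinset = G₁.edgeFinset ∪ G₂.edgeFinset := by
    ext e
    simp only [SimpleGraph.mem_edgeFinset, Finset.mem_union, hsub, Set.mem_union]
  rw [hun, Finset.card_union_of_disjoint hdisj]

/-- Restriction of a graph to a vertex set. -/
def partGraph {W : Type*} (G : SimpleGraph W) (A : Set W) : SimpleGraph W where
  Adj x y := G.Adj x y ∧ x ∈ A ∧ y ∈ A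
  symm := ⟨fun x y h => ⟨h.1.symm, h.2.2, h.2.1⟩⟩
  loopless := ⟨fun x h => G.irrefl h.1⟩

lemma partGraph_adj {W : Type*} (G : SimpleGraph W) (A : Set W) (x y : W) :
    (partGraph G A).Adj x y ↔ G.Adj x y ∧ x ∈ A ∧ y ∈ A := Iff.rfl


end Aux

theorem stmt_3 {V : Type*} [Fintype V] (G : SimpleGraph V) (Δ : ℕ) (hΔ : 2 ≤ Δ)
    (hiso : ∀ v : V, 0 < G.degree v)
    (hν : matchingNumber G = (Δ + 1) / 2)
    (hmax : G.maxDegree = Δ)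
    (hE : G.edgeFinset.card = (2 * ((Δ + 1) / 2) + 1) * Δ / 2) :
    G.Connected := by
  set ν := (Δ + 1) / 2 with hνdef
  have hν1 : 1 ≤ ν := by omega
  have hEpos : 0 < G.edgeFinset.card := by
    rw [hE]
    apply Nat.div_pos _ (by norm_num)
    calc 2 ≤ Δ := hΔ
      _ ≤ (2 * ν + 1) * Δ := Nat.le_mul_of_pos_left Δ (by omega)
  obtain ⟨e0, he0⟩ := Finset.card_pos.mp hEpos
  have hnon : Nonempty V := ⟨e0.out.1⟩
  rw [SimpleGraph.connected_iff]
  refine ⟨?_, hnon⟩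
  intro u w
  by_contra hnr
  set A : Set V := {v | G.Reachable u v} with hA
  have hclose : ∀ x y, G.Adj x y → (x ∈ A ↔ y ∈ A) := by
    intro x y hxy
    constructor
    · intro h; exact h.trans ⟨hxy.toWalk⟩
    · intro h; exact h.trans ⟨hxy.symm.toWalk⟩
  set G₁ : SimpleGraph V := partGraph G A with hG₁
  set G₂ : SimpleGraph V := partGraph G Aᶜ with hG₂
  have hmem1 : ∀ e ∈ G₁.edgeSet, ∀ v ∈ e, v ∈ A := by
    intro e
    induction e using Sym2.ind with
    | _ a b =>
      intro he v hv
      rw [SimpleGraph.mem_edgeSet, partGraph_adj] at he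
      rcases Sym2.mem_iff.mp hv with rfl | rfl
      · exact he.2.1
      · exact he.2.2
  have hmem2 : ∀ e ∈ G₂.edgeSet, ∀ v ∈ e, v ∉ A := by
    intro e
    induction e using Sym2.ind with
    | _ a b =>
      intro he v hv
      rw [SimpleGraph.mem_edgeSet, partGraph_adj] at he
      rcases Sym2.mem_iff.mp hv with rfl | rfl
      · exact he.2.1
      · exact he.2.2
  have hsub : G.edgeSet = G₁.edgeSet ∪ G₂.edgeSet := by
    ext e
    induction e using Sym2.ind with
    | _ a b =>
      simp only [Set.mem_union, SimpleGraph.mem_edgeSet, partGraph_adj, Set.mem_compl_iff]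
      constructor
      · intro h
        by_cases ha : a ∈ A
        · exact Or.inl ⟨h, ha, (hclose a b h).mp ha⟩
        · exact Or.inr ⟨h, ha, fun hb => ha ((hclose a b h).mpr hb)⟩
      · rintro (⟨h, -⟩ | ⟨h, -⟩) <;> exact h
  have hcross : ∀ e₁ ∈ G₁.edgeSet, ∀ e₂ ∈ G₂.edgeSet, ∀ v : V, ¬(v ∈ e₁ ∧ v ∈ e₂) := by
    rintro e₁ he₁ e₂ he₂ v ⟨hv1, hv2⟩
    exact hmem2 e₂ he₂ v hv2 (hmem1 e₁ he₁ v hv1)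
  have hle1 : G₁ ≤ G := fun _ _ h => h.1
  have hle2 : G₂ ≤ G := fun _ _ h => h.1
  have hdeg1 : ∀ v, G₁.degree v ≤ Δ := fun v =>
    le_trans (aux_degree_mono hle1 v) (hmax ▸ G.degree_le_maxDegree v)
  have hdeg2 : ∀ v, G₂.degree v ≤ Δ := fun v =>
    le_trans (aux_degree_mono hle2 v) (hmax ▸ G.degree_le_maxDegree v)
  -- both parts have a matching of size 1
  have hν1' : 1 ≤ matchingNumber G₁ := by
    obtain ⟨y, hy⟩ := (G.degree_pos_iff_exists_adj u).mp (hiso u)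
    have hm : IsMatchingFinset G₁ {s(u, y)} := by
      constructor
      · intro g hg
        have : g = s(u, y) := by simpa using hg
        subst this
        rw [SimpleGraph.mem_edgeSet, partGraph_adj]
        exact ⟨hy, SimpleGraph.Reachable.refl u, (hclose u y hy).mp (SimpleGraph.Reachable.refl u)⟩
      · intro a ha b hb hab
        simp only [Finset.mem_singleton] at ha hb
        subst ha; subst hb
        exact absurd rfl hab
    have := aux_card_le_nu G₁ hm
    simpa using this
  have hν2' : 1 ≤ matchingNumber G₂ := by
    have hwA : w ∉ A := hnr
    obtain ⟨z, hz⟩ := (G.degree_pos_iff_exists_adj w).mp (hiso w)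
    have hzA : z ∉ A := fun hzA => hwA ((hclose z w hz.symm).mp hzA)
    have hm : IsMatchingFinset G₂ {s(w, z)} := by
      constructor
      · intro g hg
        have : g = s(w, z) := by simpa using hg
        subst this
        rw [SimpleGraph.mem_edgeSet, partGraph_adj]
        exact ⟨hz, hwA, hzA⟩
      · intro a ha b hb hab
        simp only [Finset.mem_singleton] at ha hb
        subst ha; subst hb
        exact absurd rfl hab
    have := aux_card_le_nu G₂ hm
    simpa using this
  have hadd := aux_nu_add G G₁ G₂ hsub hcross
  rw [hν] at hadd
  have hEadd := aux_E_add G G₁ G₂ hsub hcross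
  have h2ν : 2 * ν ≤ Δ + 1 := by omega
  have hC1 := aux_C (matchingNumber G₁) Δ (by omega) G₁ hdeg1 le_rfl
  have hC2 := aux_C (matchingNumber G₂) Δ (by omega) G₂ hdeg2 le_rfl
  -- total edge bound
  have htot : G.edgeFinset.card ≤ ν * Δ := by
    rw [hEadd]
    calc G₁.edgeFinset.card + G₂.edgeFinset.card
        ≤ matchingNumber G₁ * Δ + matchingNumber G₂ * Δ := by omega
      _ = (matchingNumber G₁ + matchingNumber G₂) * Δ := by ring
      _ = ν * Δ := by rw [← hadd]
  have hq : (2 * ν + 1) * Δ = 2 * (ν * Δ) + Δ := by ring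
  rw [hE] at htot
  omega
end
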